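/- Every directed graph Ḡ = (V̄, Ē) has an optimal DAG compression (V, A, E) such that every pair of vertices t₁, t₂ ∈ V̄ that are twins in Ḡ are also twins in the directed graph (V, A) and twins in the directed graph (V, E). -/

import Mathlib

open Finset

section Defs

variable {α : Type*}

/-- The arc relation induced by a finite set of arcs. -/
def ArcRel (A : Finset (α × α)) (x y : α) : Prop := (x, y) ∈ A

/-- The cluster of a vertex `v`: the set of original vertices (elements of `Vbar`,
which are exactly the sinks of the cluster DAG) reachable from `v` in `(V, A)`. -/
def Cluster [DecidableEq α] (Vbar : Finset α) (A : Finset (α × α)) (v : α) : Set α :=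
  {u | u ∈ Vbar ∧ Relation.ReflTransGen (ArcRel A) v u}

/-- `(V, A, E)` is a DAG compression of the directed graph `(Vbar, Ebar)`. -/
structure IsDagCompression [DecidableEq α] (Vbar : Finset α) (Ebar : Finset (α × α))
    (V : Finset α) (A E : Finset (α × α)) : Prop where
  vbar_subset : Vbar ⊆ V
  arcs_subset : A ⊆ V ×ˢ V
  acyclic : ∀ v : α, ¬ Relation.TransGen (ArcRel A) v v
  sinks : ∀ v ∈ V, ((∀ u, (v, u) ∉ A) ↔ v ∈ Vbar)
  edges_subset : E ⊆ V ×ˢ V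
  represents : (↑Ebar : Set (α × α)) =
    ⋃ e ∈ E, (Cluster Vbar A e.1) ×ˢ (Cluster Vbar A e.2)

/-- An optimal DAG compression: no DAG compression of the same graph has smaller size
`|A| + |E|`. -/
def IsOptimalDagCompression [DecidableEq α] (Vbar : Finset α) (Ebar : Finset (α × α))
    (V : Finset α) (A E : Finset (α × α)) : Prop :=
  IsDagCompression Vbar Ebar V A E ∧
    ∀ (V' : Finset α) (A' E' : Finset (α × α)),
      IsDagCompression Vbar Ebar V' A' E' → A.card + E.card ≤ A'.card + E'.card

/-- The minimum size `|A| + |E|` of a DAG compression of `(Vbar, Ebar)`. -/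
noncomputable def minCompSize [DecidableEq α] (Vbar : Finset α) (Ebar : Finset (α × α)) : ℕ :=
  sInf {n | ∃ (V : Finset α) (A E : Finset (α × α)),
    IsDagCompression Vbar Ebar V A E ∧ A.card + E.card = n}

/-- Two vertices are twins in a directed graph with edge set `F`. -/
def Twins (F : Finset (α × α)) (t₁ t₂ : α) : Prop :=
  (∀ v, (v, t₁) ∈ F ↔ (v, t₂) ∈ F) ∧ (∀ v, (t₁, v) ∈ F ↔ (t₂, v) ∈ F)

/-- `(V, A)` is a rooted tree: there is a root `r ∈ V` from which every vertex of `V`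
is reachable by a unique directed path. -/
def IsTreeOn (V : Finset α) (A : Finset (α × α)) : Prop :=
  ∃ r ∈ V, ∀ v ∈ V, ∃! l : List α,
    l.Chain' (ArcRel A) ∧ l.head? = some r ∧ l.getLast? = some v

end Defs

/-- Vertex set of the `g × g` rook graph: the grid `{1,…,g} × {1,…,g}`. -/
def rookV (g : ℕ) : Finset (ℕ × ℕ) := Finset.Icc 1 g ×ˢ Finset.Icc 1 g

/-- Edge set of the `g × g` rook graph: `(r₁,c₁) → (r₂,c₂)` iff `r₁ = r₂ ∨ c₁ = c₂`. -/
def rookE (g : ℕ) : Finset ((ℕ × ℕ) × (ℕ × ℕ)) :=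
  (rookV g ×ˢ rookV g).filter (fun e => e.1.1 = e.2.1 ∨ e.1.2 = e.2.2)

section Tig

variable {α : Type*} [DecidableEq α]

/-- Vertex type used for twinned incidence graphs: either an element of the universe
(second shore) or one of the fresh vertices `a_S`, `b_S` (first shore). -/
abbrev TigVertex (α : Type*) := α ⊕ (Finset α × Bool)

/-- The fresh vertex `a_S`. -/
def aVert (S : Finset α) : TigVertex α := Sum.inr (S, false)

/-- The fresh vertex `b_S`. -/
def bVert (S : Finset α) : TigVertex α := Sum.inr (S, true)

/-- Vertex set of the twinned incidence graph of a collection `T` of subsets of `U`. -/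
def tigV (U : Finset α) (T : Finset (Finset α)) : Finset (TigVertex α) :=
  U.image Sum.inl ∪ T.image aVert ∪ T.image bVert

/-- Edge set of the twinned incidence graph: edges `(a_S, s)` and `(b_S, s)` for
`S ∈ T` and `s ∈ S`. -/
def tigE (T : Finset (Finset α)) : Finset (TigVertex α × TigVertex α) :=
  T.biUnion fun S =>
    S.image (fun s => (aVert S, Sum.inl s)) ∪ S.image (fun s => (bVert S, Sum.inl s))

end Tig

/-- `{S ∩ {1,…,i} : S ∈ T, 1 ≤ i ≤ m} ∖ {∅}` together with all singletons `{j}`, `j ∈ {1,…,m}`. -/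
def hatCollection (m : ℕ) (T : Finset (Finset ℕ)) : Finset (Finset ℕ) :=
  (Finset.Icc 1 m).image (fun j => ({j} : Finset ℕ)) ∪
    ((T ×ˢ Finset.Icc 1 m).image (fun p => p.1 ∩ Finset.Icc 1 p.2)).erase ∅

section Aux

attribute [local instance] Classical.propDecidable

variable {α : Type*} [DecidableEq α]

/-! ### Twins basics -/

lemma twins_refl (F : Finset (α × α)) (t : α) : Twins F t t := ⟨fun _ => Iff.rfl, fun _ => Iff.rfl⟩

lemma twins_symm {F : Finset (α × α)} {t s : α} (h : Twins F t s) : Twins F s t :=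
  ⟨fun v => (h.1 v).symm, fun v => (h.2 v).symm⟩

lemma twins_trans {F : Finset (α × α)} {t s u : α} (h : Twins F t s) (h' : Twins F s u) :
    Twins F t u :=
  ⟨fun v => (h.1 v).trans (h'.1 v), fun v => (h.2 v).trans (h'.2 v)⟩

/-- The twin-class of a vertex. -/
noncomputable def classOf (Vbar : Finset α) (Ebar : Finset (α × α)) (t : α) : Finset α :=
  Vbar.filter fun s => Twins Ebar t s

lemma mem_classOf {Vbar : Finset α} {Ebar : Finset (α × α)} {t s : α} :
    s ∈ classOf Vbar Ebar t ↔ s ∈ Vbar ∧ Twins Ebar t s := Finset.mem_filter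

lemma mem_classOf_self {Vbar : Finset α} {Ebar : Finset (α × α)} {t : α} (ht : t ∈ Vbar) :
    t ∈ classOf Vbar Ebar t := mem_classOf.2 ⟨ht, twins_refl _ _⟩

lemma classOf_eq_of_twins {Vbar : Finset α} {Ebar : Finset (α × α)} {t s : α}
    (h : Twins Ebar t s) : classOf Vbar Ebar t = classOf Vbar Ebar s := by
  ext u
  simp only [mem_classOf]
  exact and_congr_right fun _ => ⟨fun h' => twins_trans (twins_symm h) h',
    fun h' => twins_trans h h'⟩

lemma classOf_subset_vbar {Vbar : Finset α} {Ebar : Finset (α × α)} {t : α} :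
    classOf Vbar Ebar t ⊆ Vbar := Finset.filter_subset _ _

/-- twin transfer of an `Ebar`-pair -/
lemma twins_pair_transfer {Ebar : Finset (α × α)} {x y x' y' : α}
    (hx : Twins Ebar x x') (hy : Twins Ebar y y') (h : (x, y) ∈ Ebar) : (x', y') ∈ Ebar := by
  have h1 : (x', y) ∈ Ebar := (hx.2 y).1 h
  exact (hy.1 x').1 h1

/-! ### Cluster basics -/

lemma mem_cluster_self {Vbar : Finset α} {A : Finset (α × α)} {t : α} (ht : t ∈ Vbar) :
    t ∈ Cluster Vbar A t := ⟨ht, Relation.ReflTransGen.refl⟩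

lemma cluster_subset_vbar {Vbar : Finset α} {A : Finset (α × α)} {v x : α}
    (h : x ∈ Cluster Vbar A v) : x ∈ Vbar := h.1

lemma rtg_sink_eq {B : Finset (α × α)} {s x : α} (hs : ∀ u, (s, u) ∉ B)
    (h : Relation.ReflTransGen (ArcRel B) s x) : x = s := by
  cases (Relation.ReflTransGen.cases_head h) with
  | inl h => exact h.symm
  | inr h => obtain ⟨c, hc, _⟩ := h; exact absurd hc (hs c)

lemma cluster_sink {Vbar : Finset α} {B : Finset (α × α)} {t x : α}
    (hs : ∀ u, (t, u) ∉ B) (h : x ∈ Cluster Vbar B t) : x = t :=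
  rtg_sink_eq hs h.2

lemma cluster_mono {Vbar : Finset α} {A B : Finset (α × α)} (hAB : A ⊆ B) {v : α} :
    Cluster Vbar A v ⊆ Cluster Vbar B v := by
  intro x hx
  exact ⟨hx.1, Relation.ReflTransGen.mono (r := ArcRel A) (p := ArcRel B) (fun a b h => hAB h) _ _ hx.2⟩

/-- reachability prepend to cluster membership -/
lemma cluster_of_rtg {Vbar : Finset α} {A : Finset (α × α)} {v w x : α}
    (h : Relation.ReflTransGen (ArcRel A) v w) (hx : x ∈ Cluster Vbar A w) :
    x ∈ Cluster Vbar A v := ⟨hx.1, h.trans hx.2⟩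

/-- no out-arcs from `Vbar` members, for a compression -/
lemma sink_no_out {Vbar : Finset α} {Ebar : Finset (α × α)} {V : Finset α}
    {A E : Finset (α × α)} (hD : IsDagCompression Vbar Ebar V A E) {t : α} (ht : t ∈ Vbar) :
    ∀ u, (t, u) ∉ A := (hD.sinks t (hD.vbar_subset ht)).mpr ht

lemma cluster_sink_of_comp {Vbar : Finset α} {Ebar : Finset (α × α)} {V : Finset α}
    {A E : Finset (α × α)} (hD : IsDagCompression Vbar Ebar V A E) {t x : α} (ht : t ∈ Vbar)
    (h : x ∈ Cluster Vbar A t) : x = t := cluster_sink (sink_no_out hD ht) h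

/-- soundness: a pair covered by an edge is in `Ebar` -/
lemma cover_sound {Vbar : Finset α} {Ebar : Finset (α × α)} {V : Finset α}
    {A E : Finset (α × α)} (hD : IsDagCompression Vbar Ebar V A E) {e : α × α} (he : e ∈ E)
    {x y : α} (hx : x ∈ Cluster Vbar A e.1) (hy : y ∈ Cluster Vbar A e.2) : (x, y) ∈ Ebar := by
  have : ((x, y) : α × α) ∈ (↑Ebar : Set (α × α)) := by
    rw [hD.represents]
    exact Set.mem_iUnion₂.2 ⟨e, he, Set.mk_mem_prod hx hy⟩
  exact this

/-- completeness: every `Ebar` pair is covered by some edge -/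
lemma cover_ex {Vbar : Finset α} {Ebar : Finset (α × α)} {V : Finset α}
    {A E : Finset (α × α)} (hD : IsDagCompression Vbar Ebar V A E) {x y : α}
    (h : (x, y) ∈ Ebar) : ∃ e ∈ E, x ∈ Cluster Vbar A e.1 ∧ y ∈ Cluster Vbar A e.2 := by
  have : ((x, y) : α × α) ∈ (↑Ebar : Set (α × α)) := h
  rw [hD.represents] at this
  obtain ⟨e, he, hmem⟩ := Set.mem_iUnion₂.1 this
  exact ⟨e, he, hmem.1, hmem.2⟩

end Aux
section Aux2

set_option linter.unusedSectionVars false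

attribute [local instance] Classical.propDecidable

variable {α : Type*} [DecidableEq α]

/-- decomposition of reachability after inserting an arc `(w,d)` whose target is dead -/
lemma rtg_insert_dead {B : Finset (α × α)} {w d : α}
    (hdead : ∀ u, (d, u) ∉ B) (hwd : w ≠ d) {x s : α}
    (h : Relation.ReflTransGen (ArcRel (insert (w, d) B)) x s) :
    Relation.ReflTransGen (ArcRel B) x s ∨
      (s = d ∧ Relation.ReflTransGen (ArcRel B) x w) := by
  induction h with
  | refl => exact Or.inl Relation.ReflTransGen.refl
  | @tail y s' hxy harc ih =>
    rcases Finset.mem_insert.1 harc with heq | hB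
    · injection heq with hy hs
      rcases ih with h1 | h2
      · exact Or.inr ⟨hs, hy ▸ h1⟩
      · exact absurd (hy ▸ h2.1 : w = d) hwd
    · rcases ih with h1 | h2
      · exact Or.inl (h1.tail hB)
      · exact absurd (h2.1 ▸ hB : (d, s') ∈ B) (hdead s')

lemma tg_insert_dead {B : Finset (α × α)} {w d : α}
    (hdead : ∀ u, (d, u) ∉ insert (w, d) B) {x s : α}
    (h : Relation.TransGen (ArcRel (insert (w, d) B)) x s) (hs : s ≠ d) :
    Relation.TransGen (ArcRel B) x s := by
  induction h with
  | single harc =>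
    rcases Finset.mem_insert.1 harc with heq | hB
    · injection heq with _ h2; exact absurd h2 hs
    · exact Relation.TransGen.single hB
  | @tail y s' hxy harc ih =>
    rcases Finset.mem_insert.1 harc with heq | hB
    · injection heq with _ h2; exact absurd h2 hs
    · have hy : y ≠ d := by
        intro hyd
        exact hdead s' (hyd ▸ Finset.mem_insert_of_mem hB)
      exact (ih hy).tail hB

/-- acyclicity is preserved by inserting an arc to a dead target -/
lemma acyclic_insert_dead {B : Finset (α × α)} {w d : α}
    (hacy : ∀ v, ¬ Relation.TransGen (ArcRel B) v v)
    (hdead : ∀ u, (d, u) ∉ insert (w, d) B) :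
    ∀ v, ¬ Relation.TransGen (ArcRel (insert (w, d) B)) v v := by
  intro v hv
  by_cases hvd : v = d
  · obtain ⟨b, hb, _⟩ := Relation.TransGen.head'_iff.1 hv
    exact hdead b (hvd ▸ hb)
  · exact hacy v (tg_insert_dead hdead hv hvd)

end Aux2
section Aux3

set_option linter.unusedSectionVars false

attribute [local instance] Classical.propDecidable

variable {α : Type*} [DecidableEq α]

/-- loops of `E` at sinks whose twin-class has size at least 2 -/
noncomputable def loopSet (Vbar : Finset α) (Ebar E : Finset (α × α)) : Finset (α × α) :=
  E.filter fun e => e.1 = e.2 ∧ e.1 ∈ Vbar ∧ 2 ≤ (classOf Vbar Ebar e.1).card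

noncomputable def nL (Vbar : Finset α) (Ebar E : Finset (α × α)) : ℕ :=
  (loopSet Vbar Ebar E).card

/-- a twin class is treated uniformly by `A` and `E` -/
def Unif (C : Finset α) (A E : Finset (α × α)) : Prop :=
  (∀ (v : α), ∀ t ∈ C, ∀ t' ∈ C, ((v, t) ∈ A ↔ (v, t') ∈ A)) ∧
  (∀ (v : α), ∀ t ∈ C, ∀ t' ∈ C, ((v, t) ∈ E ↔ (v, t') ∈ E)) ∧
  (∀ (v : α), ∀ t ∈ C, ∀ t' ∈ C, ((t, v) ∈ E ↔ (t', v) ∈ E))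

noncomputable def mM (Vbar : Finset α) (Ebar A E : Finset (α × α)) : ℕ :=
  ((Vbar.image (classOf Vbar Ebar)).filter fun C => ¬ Unif C A E).card

lemma unif_singleton {t : α} {A E : Finset (α × α)} : Unif {t} A E := by
  refine ⟨?_, ?_, ?_⟩ <;>
  · intro v s hs s' hs'
    rw [Finset.mem_singleton] at hs hs'
    subst hs; subst hs'; exact Iff.rfl

/-- The trivial compression. -/
lemma trivial_comp {Vbar : Finset α} {Ebar : Finset (α × α)} (hE : Ebar ⊆ Vbar ×ˢ Vbar) :
    IsDagCompression Vbar Ebar Vbar (∅ : Finset (α × α)) Ebar where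
  vbar_subset := le_refl _
  arcs_subset := Finset.empty_subset _
  acyclic := by
    intro v hv
    obtain ⟨b, hb, _⟩ := Relation.TransGen.head'_iff.1 hv
    exact absurd hb (Finset.notMem_empty _)
  sinks := by
    intro v hv
    exact ⟨fun _ => hv, fun _ u => Finset.notMem_empty _⟩
  edges_subset := hE
  represents := by
    ext ⟨x, y⟩
    constructor
    · intro hxy
      have hxy' : (x, y) ∈ Ebar := hxy
      have hx : x ∈ Vbar := (Finset.mem_product.1 (hE hxy')).1
      have hy : y ∈ Vbar := (Finset.mem_product.1 (hE hxy')).2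
      exact Set.mem_iUnion₂.2 ⟨(x, y), hxy', Set.mk_mem_prod (mem_cluster_self hx)
        (mem_cluster_self hy)⟩
    · intro hxy
      obtain ⟨e, he, hmem⟩ := Set.mem_iUnion₂.1 hxy
      have h1 : x = e.1 := rtg_sink_eq (fun u => Finset.notMem_empty _) hmem.1.2
      have h2 : y = e.2 := rtg_sink_eq (fun u => Finset.notMem_empty _) hmem.2.2
      have : (x, y) = e := by rw [h1, h2]
      exact this ▸ he

/-- a second cover of the pair of a loop contradicts optimality -/
lemma second_cover_false {Vbar : Finset α} {Ebar : Finset (α × α)} {V : Finset α}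
    {A E : Finset (α × α)} (hD : IsDagCompression Vbar Ebar V A E)
    (hmin : ∀ (V' : Finset α) (A' E' : Finset (α × α)),
      IsDagCompression Vbar Ebar V' A' E' → A.card + E.card ≤ A'.card + E'.card)
    {a : α} (ha : a ∈ Vbar) (hloop : (a, a) ∈ E) {e : α × α} (he : e ∈ E) (hne : e ≠ (a, a))
    (h1 : a ∈ Cluster Vbar A e.1) (h2 : a ∈ Cluster Vbar A e.2) : False := by
  have hcomp : IsDagCompression Vbar Ebar V A (E.erase (a, a)) := by
    refine ⟨hD.vbar_subset, hD.arcs_subset, hD.acyclic, hD.sinks,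
      (Finset.erase_subset _ _).trans hD.edges_subset, ?_⟩
    ext ⟨x, y⟩
    constructor
    · intro hxy
      have hxy' : (x, y) ∈ Ebar := hxy
      obtain ⟨f, hf, hx, hy⟩ := cover_ex hD hxy'
      by_cases hfl : f = (a, a)
      · subst hfl
        have hxa : x = a := cluster_sink_of_comp hD ha hx
        have hya : y = a := cluster_sink_of_comp hD ha hy
        subst hxa; subst hya
        exact Set.mem_iUnion₂.2 ⟨e, Finset.mem_erase.2 ⟨hne, he⟩, Set.mk_mem_prod h1 h2⟩
      · exact Set.mem_iUnion₂.2 ⟨f, Finset.mem_erase.2 ⟨hfl, hf⟩, Set.mk_mem_prod hx hy⟩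
    · intro hxy
      obtain ⟨f, hf, hmem⟩ := Set.mem_iUnion₂.1 hxy
      exact cover_sound hD (Finset.mem_of_mem_erase hf) hmem.1 hmem.2
  have hle := hmin V A (E.erase (a, a)) hcomp
  have hcard : (E.erase (a, a)).card = E.card - 1 := Finset.card_erase_of_mem hloop
  have hpos : 1 ≤ E.card := Finset.card_pos.2 ⟨_, hloop⟩
  omega

/-- replace the loop `(a,a)` by an edge `(p,q)` that covers `(a,a)` soundly -/
lemma replace_loop {Vbar : Finset α} {Ebar : Finset (α × α)} {V : Finset α}
    {A E : Finset (α × α)} (hD : IsDagCompression Vbar Ebar V A E)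
    {a : α} (ha : a ∈ Vbar) (hloop : (a, a) ∈ E) {p q : α} (hp : p ∈ V) (hq : q ∈ V)
    (hcp : a ∈ Cluster Vbar A p) (hcq : a ∈ Cluster Vbar A q)
    (hsound : ∀ x y, x ∈ Cluster Vbar A p → y ∈ Cluster Vbar A q → (x, y) ∈ Ebar)
    (hne : (p, q) ∉ E) :
    IsDagCompression Vbar Ebar V A (insert (p, q) (E.erase (a, a))) ∧
      (insert (p, q) (E.erase (a, a))).card = E.card := by
  constructor
  · refine ⟨hD.vbar_subset, hD.arcs_subset, hD.acyclic, hD.sinks, ?_, ?_⟩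
    · exact Finset.insert_subset (Finset.mem_product.2 ⟨hp, hq⟩)
        ((Finset.erase_subset _ _).trans hD.edges_subset)
    · ext ⟨x, y⟩
      constructor
      · intro hxy
        have hxy' : (x, y) ∈ Ebar := hxy
        obtain ⟨f, hf, hx, hy⟩ := cover_ex hD hxy'
        by_cases hfl : f = (a, a)
        · subst hfl
          have hxa : x = a := cluster_sink_of_comp hD ha hx
          have hya : y = a := cluster_sink_of_comp hD ha hy
          subst hxa; subst hya
          exact Set.mem_iUnion₂.2 ⟨(p, q), Finset.mem_insert_self _ _,
            Set.mk_mem_prod hcp hcq⟩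
        · exact Set.mem_iUnion₂.2 ⟨f, Finset.mem_insert_of_mem (Finset.mem_erase.2 ⟨hfl, hf⟩),
            Set.mk_mem_prod hx hy⟩
      · intro hxy
        obtain ⟨f, hf, hmem⟩ := Set.mem_iUnion₂.1 hxy
        rcases Finset.mem_insert.1 hf with heq | hf'
        · subst heq
          exact hsound x y hmem.1 hmem.2
        · exact cover_sound hD (Finset.mem_of_mem_erase hf') hmem.1 hmem.2
  · have h1 : (p, q) ∉ E.erase (a, a) := fun h => hne (Finset.mem_of_mem_erase h)
    rw [Finset.card_insert_of_notMem h1, Finset.card_erase_of_mem hloop]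
    have hpos : 1 ≤ E.card := Finset.card_pos.2 ⟨_, hloop⟩
    omega

end Aux3
section Aux4

set_option linter.unusedSectionVars false

attribute [local instance] Classical.propDecidable

variable {α : Type*} [DecidableEq α]

lemma cluster_insert_dead {Vbar : Finset α} {Ebar : Finset (α × α)} {V : Finset α}
    {A E : Finset (α × α)} (hD : IsDagCompression Vbar Ebar V A E)
    {a w : α} (ha : a ∈ Vbar) (hwnb : w ∉ Vbar) {t : α} (ht : t ∈ Cluster Vbar A w)
    {v x : α} (hx : x ∈ Cluster Vbar (insert (w, a) A) v) :
    x ∈ Cluster Vbar A v ∨ (x = a ∧ t ∈ Cluster Vbar A v) := by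
  have hwa : w ≠ a := fun h => hwnb (h ▸ ha)
  rcases rtg_insert_dead (sink_no_out hD ha) hwa hx.2 with h1 | h2
  · exact Or.inl ⟨hx.1, h1⟩
  · exact Or.inr ⟨h2.1, cluster_of_rtg h2.2 ht⟩

/-- exchange the loop `(a,a)` for an arc `(w,a)` -/
lemma arc_exchange {Vbar : Finset α} {Ebar : Finset (α × α)} {V : Finset α}
    {A E : Finset (α × α)} (hD : IsDagCompression Vbar Ebar V A E)
    {a : α} (ha : a ∈ Vbar) (hloop : (a, a) ∈ E) {w t : α} (hw : w ∈ V) (hwnb : w ∉ Vbar)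
    (hwa : (w, a) ∉ A) (ht : t ∈ Cluster Vbar A w) (htw : Twins Ebar a t)
    {e₀ : α × α} (he₀ : e₀ ∈ E) (h0ne : e₀ ≠ (a, a))
    (hc1 : a ∈ Cluster Vbar (insert (w, a) A) e₀.1)
    (hc2 : a ∈ Cluster Vbar (insert (w, a) A) e₀.2) :
    IsDagCompression Vbar Ebar V (insert (w, a) A) (E.erase (a, a)) ∧
      (insert (w, a) A).card + (E.erase (a, a)).card = A.card + E.card := by
  have hwa' : w ≠ a := fun h => hwnb (h ▸ ha)
  have hdead : ∀ u, (a, u) ∉ insert (w, a) A := by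
    intro u hu
    rcases Finset.mem_insert.1 hu with heq | hA
    · injection heq with h1 _; exact hwa' h1.symm
    · exact sink_no_out hD ha u hA
  constructor
  · refine ⟨hD.vbar_subset, ?_, ?_, ?_, ?_, ?_⟩
    · exact Finset.insert_subset (Finset.mem_product.2 ⟨hw, hD.vbar_subset ha⟩) hD.arcs_subset
    · exact acyclic_insert_dead hD.acyclic hdead
    · intro v hv
      constructor
      · intro hno
        by_contra hvb
        have := (hD.sinks v hv).1 (fun u hu => hno u (Finset.mem_insert_of_mem hu))
        exact hvb this
      · intro hvb u hu
        rcases Finset.mem_insert.1 hu with heq | hA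
        · injection heq with h1 _
          exact hwnb (h1 ▸ hvb)
        · exact sink_no_out hD hvb u hA
    · exact (Finset.erase_subset _ _).trans hD.edges_subset
    · ext ⟨x, y⟩
      constructor
      · intro hxy
        have hxy' : (x, y) ∈ Ebar := hxy
        obtain ⟨f, hf, hx, hy⟩ := cover_ex hD hxy'
        by_cases hfl : f = (a, a)
        · subst hfl
          have hxa : x = a := cluster_sink_of_comp hD ha hx
          have hya : y = a := cluster_sink_of_comp hD ha hy
          subst hxa; subst hya
          exact Set.mem_iUnion₂.2 ⟨e₀, Finset.mem_erase.2 ⟨h0ne, he₀⟩,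
            Set.mk_mem_prod hc1 hc2⟩
        · exact Set.mem_iUnion₂.2 ⟨f, Finset.mem_erase.2 ⟨hfl, hf⟩,
            Set.mk_mem_prod (cluster_mono (Finset.subset_insert _ _) hx)
              (cluster_mono (Finset.subset_insert _ _) hy)⟩
      · intro hxy
        obtain ⟨f, hf, hmem⟩ := Set.mem_iUnion₂.1 hxy
        have hfE : f ∈ E := Finset.mem_of_mem_erase hf
        rcases cluster_insert_dead hD ha hwnb ht hmem.1 with hx1 | hx2 <;>
          rcases cluster_insert_dead hD ha hwnb ht hmem.2 with hy1 | hy2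
        · exact cover_sound hD hfE hx1 hy1
        · have hya : y = a := hy2.1
          subst hya
          exact twins_pair_transfer (twins_refl _ _) (twins_symm htw)
            (cover_sound hD hfE hx1 hy2.2)
        · have hxa : x = a := hx2.1
          subst hxa
          exact twins_pair_transfer (twins_symm htw) (twins_refl _ _)
            (cover_sound hD hfE hx2.2 hy1)
        · have hxa : x = a := hx2.1
          have hya : y = a := hy2.1
          subst hxa; subst hya
          exact twins_pair_transfer (twins_symm htw) (twins_symm htw)
            (cover_sound hD hfE hx2.2 hy2.2)
  · rw [Finset.card_insert_of_notMem hwa, Finset.card_erase_of_mem hloop]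
    have hpos : 1 ≤ E.card := Finset.card_pos.2 ⟨_, hloop⟩
    omega

end Aux4
section Aux5

set_option linter.unusedSectionVars false

attribute [local instance] Classical.propDecidable

variable {α : Type*} [DecidableEq α]

/-- all pairs within a twin class of a looped sink are in `Ebar` -/
lemma class_square_sub {Vbar : Finset α} {Ebar : Finset (α × α)} {V : Finset α}
    {A E : Finset (α × α)} (hD : IsDagCompression Vbar Ebar V A E)
    {a : α} (ha : a ∈ Vbar) (hloop : (a, a) ∈ E) {x y : α}
    (hx : x ∈ classOf Vbar Ebar a) (hy : y ∈ classOf Vbar Ebar a) : (x, y) ∈ Ebar := by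
  have haa : (a, a) ∈ Ebar := by
    have := cover_sound hD hloop (x := a) (y := a) (mem_cluster_self ha) (mem_cluster_self ha)
    exact this
  exact twins_pair_transfer (mem_classOf.1 hx).2 (mem_classOf.1 hy).2 haa

/-- the gadget exchange for the stuck case -/
lemma gadget_exchange {Vbar : Finset α} {Ebar : Finset (α × α)} {V : Finset α}
    {A E : Finset (α × α)} (hD : IsDagCompression Vbar Ebar V A E)
    {a : α} (ha : a ∈ Vbar) (hloop : (a, a) ∈ E)
    (hk : 2 ≤ (classOf Vbar Ebar a).card)
    (hstars : ∀ t ∈ (classOf Vbar Ebar a).erase a, (a, t) ∈ E ∧ (t, a) ∈ E)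
    {c : α} (hc : c ∉ V) :
    ∃ (V' : Finset α) (A' E' : Finset (α × α)),
      IsDagCompression Vbar Ebar V' A' E' ∧
      A'.card + E'.card ≤ A.card + E.card ∧
      loopSet Vbar Ebar E' ⊆ (loopSet Vbar Ebar E).erase (a, a) := by
  classical
  obtain ⟨C, hC⟩ : ∃ C : Finset α, C = classOf Vbar Ebar a := ⟨_, rfl⟩
  have hCsub : C ⊆ Vbar := by rw [hC]; exact fun x hx => classOf_subset_vbar hx
  have haC : a ∈ C := by rw [hC]; exact mem_classOf_self ha
  have hkC : 2 ≤ C.card := by rw [hC]; exact hk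
  have hCV : C ⊆ V := fun x hx => hD.vbar_subset (hCsub hx)
  have hcVbar : c ∉ Vbar := fun h => hc (hD.vbar_subset h)
  rw [← hC] at hstars
  set S : Finset (α × α) := insert (a, a)
    (((C.erase a).image (fun t => (a, t))) ∪ ((C.erase a).image (fun t => (t, a)))) with hS
  set A' : Finset (α × α) := A ∪ C.image (fun s => (c, s)) with hA'
  set E' : Finset (α × α) := insert (c, c) (E \ S) with hE'
  set V' : Finset α := insert c V with hV'
  -- basic facts
  have hSE : S ⊆ E := by
    intro e he
    rcases Finset.mem_insert.1 he with h | h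
    · exact h ▸ hloop
    · rcases Finset.mem_union.1 h with h | h
      · obtain ⟨t, ht, rfl⟩ := Finset.mem_image.1 h
        exact (hstars t ht).1
      · obtain ⟨t, ht, rfl⟩ := Finset.mem_image.1 h
        exact (hstars t ht).2
  have harcc : ∀ p ∈ A, p.1 ≠ c ∧ p.2 ≠ c := by
    intro p hp
    have := Finset.mem_product.1 (hD.arcs_subset hp)
    exact ⟨fun h => hc (h ▸ this.1), fun h => hc (h ▸ this.2)⟩
  have hdeadVbar : ∀ t ∈ Vbar, ∀ u, (t, u) ∉ A' := by
    intro t ht u hu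
    rcases Finset.mem_union.1 hu with h | h
    · exact sink_no_out hD ht u h
    · obtain ⟨s, _, heq⟩ := Finset.mem_image.1 h
      injection heq with h1 _
      exact hc (hD.vbar_subset (h1 ▸ ht))
  -- reachability in A' from old vertices stays in A
  have hreach : ∀ x s, Relation.ReflTransGen (ArcRel A') x s → x ∈ V →
      Relation.ReflTransGen (ArcRel A) x s ∧ s ∈ V := by
    intro x s h hx
    induction h with
    | refl => exact ⟨Relation.ReflTransGen.refl, hx⟩
    | @tail y s' hxy harc ih =>
      obtain ⟨h1, hyV⟩ := ih
      rcases Finset.mem_union.1 harc with hA | him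
      · exact ⟨h1.tail hA, (Finset.mem_product.1 (hD.arcs_subset hA)).2⟩
      · obtain ⟨t, _, heq⟩ := Finset.mem_image.1 him
        injection heq with h2 _
        exact absurd (h2 ▸ hyV) hc
  have hclus : ∀ v ∈ V, Cluster Vbar A' v = Cluster Vbar A v := by
    intro v hv
    ext x
    constructor
    · intro hx
      exact ⟨hx.1, (hreach v x hx.2 hv).1⟩
    · intro hx
      exact ⟨hx.1, Relation.ReflTransGen.mono (r := ArcRel A) (p := ArcRel A') (fun p q h => Finset.mem_union_left _ h) _ _ hx.2⟩
  have hclusc : Cluster Vbar A' c = (↑C : Set α) := by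
    ext x
    constructor
    · intro hx
      rcases Relation.ReflTransGen.cases_head hx.2 with heq | ⟨b, hb, hrest⟩
      · exact absurd (heq ▸ hx.1) hcVbar
      · rcases Finset.mem_union.1 hb with hA | him
        · exact absurd (Finset.mem_product.1 (hD.arcs_subset hA)).1 hc
        · obtain ⟨t, htC, heq⟩ := Finset.mem_image.1 him
          injection heq with _ h2
          have htV : t ∈ Vbar := hCsub htC
          have hxt := rtg_sink_eq (hdeadVbar t htV) (h2 ▸ hrest)
          exact hxt ▸ (Finset.mem_coe.2 htC)
    · intro hx
      have hxC : x ∈ C := hx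
      refine ⟨hCsub hxC, Relation.ReflTransGen.single ?_⟩
      exact Finset.mem_union_right _ (Finset.mem_image.2 ⟨x, hxC, rfl⟩)
  have hcomp : IsDagCompression Vbar Ebar V' A' E' := by
    refine ⟨?_, ?_, ?_, ?_, ?_, ?_⟩
    · exact hD.vbar_subset.trans (Finset.subset_insert _ _)
    · intro p hp
      rcases Finset.mem_union.1 hp with h | h
      · have := Finset.mem_product.1 (hD.arcs_subset h)
        exact Finset.mem_product.2 ⟨Finset.mem_insert_of_mem this.1,
          Finset.mem_insert_of_mem this.2⟩
      · obtain ⟨s, hs, rfl⟩ := Finset.mem_image.1 h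
        exact Finset.mem_product.2 ⟨Finset.mem_insert_self _ _,
          Finset.mem_insert_of_mem (hCV hs)⟩
    · intro v hv
      by_cases hvc : v = c
      · subst hvc
        obtain ⟨b, hb, hrest⟩ := Relation.TransGen.head'_iff.1 hv
        rcases Finset.mem_union.1 hb with hA | him
        · exact absurd (Finset.mem_product.1 (hD.arcs_subset hA)).1 hc
        · obtain ⟨t, htC, heq⟩ := Finset.mem_image.1 him
          injection heq with _ h2
          have htV : t ∈ Vbar := hCsub htC
          have hct := rtg_sink_eq (hdeadVbar t htV) (h2 ▸ hrest)
          exact hc (hD.vbar_subset (hct ▸ htV))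
      · -- cycle avoiding c stays in A
        have : ∀ x s, Relation.TransGen (ArcRel A') x s → x ≠ c →
            Relation.TransGen (ArcRel A) x s := by
          intro x s h hx
          induction h with
          | single harc =>
            rcases Finset.mem_union.1 harc with hA | him
            · exact Relation.TransGen.single hA
            · obtain ⟨t, _, heq⟩ := Finset.mem_image.1 him
              injection heq with h1 _
              exact absurd h1.symm hx
          | @tail y s' hxy harc ih =>
            have h1 := ih
            rcases Finset.mem_union.1 harc with hA | him
            · exact h1.tail hA
            · obtain ⟨t, _, heq⟩ := Finset.mem_image.1 him
              injection heq with h2 _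
              subst h2
              -- y = c reached from x in A : impossible since targets of A are in V
              have : Relation.ReflTransGen (ArcRel A) x c := h1.to_reflTransGen
              rcases Relation.ReflTransGen.cases_tail this with heq2 | ⟨b, _, hb2⟩
              · exact absurd heq2.symm hx
              · exact absurd (Finset.mem_product.1 (hD.arcs_subset hb2)).2 hc
        exact hD.acyclic v (this v v hv hvc)
    · intro v hv
      rcases Finset.mem_insert.1 hv with hvc | hvV
      · subst hvc
        constructor
        · intro hno
          exact absurd (Finset.mem_union_right _
            (Finset.mem_image.2 ⟨a, haC, rfl⟩)) (hno a)
        · intro hvb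
          exact absurd hvb hcVbar
      · constructor
        · intro hno
          exact (hD.sinks v hvV).1 (fun u hu => hno u (Finset.mem_union_left _ hu))
        · intro hvb
          exact hdeadVbar v hvb
    · intro e he
      rcases Finset.mem_insert.1 he with h | h
      · subst h
        exact Finset.mem_product.2 ⟨Finset.mem_insert_self _ _, Finset.mem_insert_self _ _⟩
      · have heE : e ∈ E := (Finset.mem_sdiff.1 h).1
        have := Finset.mem_product.1 (hD.edges_subset heE)
        exact Finset.mem_product.2 ⟨Finset.mem_insert_of_mem this.1,
          Finset.mem_insert_of_mem this.2⟩
    · ext ⟨x, y⟩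
      constructor
      · intro hxy
        have hxy' : (x, y) ∈ Ebar := hxy
        obtain ⟨f, hf, hx, hy⟩ := cover_ex hD hxy'
        by_cases hfS : f ∈ S
        · -- x, y ∈ C ; use the gadget loop
          have hxyC : x ∈ C ∧ y ∈ C := by
            rcases Finset.mem_insert.1 hfS with h | h
            · subst h
              have hxa := cluster_sink_of_comp hD ha hx
              have hya := cluster_sink_of_comp hD ha hy
              exact ⟨hxa ▸ haC, hya ▸ haC⟩
            · rcases Finset.mem_union.1 h with h | h
              · obtain ⟨t, htC, rfl⟩ := Finset.mem_image.1 h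
                have htC' := Finset.mem_of_mem_erase htC
                have hxa := cluster_sink_of_comp hD ha hx
                have hyt := cluster_sink_of_comp hD (hCsub htC') hy
                exact ⟨hxa ▸ haC, hyt ▸ htC'⟩
              · obtain ⟨t, htC, rfl⟩ := Finset.mem_image.1 h
                have htC' := Finset.mem_of_mem_erase htC
                have hxt := cluster_sink_of_comp hD (hCsub htC') hx
                have hya := cluster_sink_of_comp hD ha hy
                exact ⟨hxt ▸ htC', hya ▸ haC⟩
          refine Set.mem_iUnion₂.2 ⟨(c, c), Finset.mem_insert_self _ _,
            Set.mk_mem_prod ?_ ?_⟩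
          · show x ∈ Cluster Vbar A' c
            rw [hclusc]; exact hxyC.1
          · show y ∈ Cluster Vbar A' c
            rw [hclusc]; exact hxyC.2
        · have hfV := Finset.mem_product.1 (hD.edges_subset hf)
          refine Set.mem_iUnion₂.2 ⟨f, Finset.mem_insert_of_mem (Finset.mem_sdiff.2 ⟨hf, hfS⟩),
            Set.mk_mem_prod ?_ ?_⟩
          · show x ∈ Cluster Vbar A' f.1
            rw [hclus f.1 hfV.1]; exact hx
          · show y ∈ Cluster Vbar A' f.2
            rw [hclus f.2 hfV.2]; exact hy
      · intro hxy
        obtain ⟨f, hf, hmem⟩ := Set.mem_iUnion₂.1 hxy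
        rcases Finset.mem_insert.1 hf with h | h
        · subst h
          have hx' : x ∈ Cluster Vbar A' c := hmem.1
          have hy' : y ∈ Cluster Vbar A' c := hmem.2
          rw [hclusc] at hx' hy'
          have hx'' : x ∈ classOf Vbar Ebar a := hC ▸ (Finset.mem_coe.1 hx')
          have hy'' : y ∈ classOf Vbar Ebar a := hC ▸ (Finset.mem_coe.1 hy')
          exact class_square_sub hD ha hloop hx'' hy''
        · have heE : f ∈ E := (Finset.mem_sdiff.1 h).1
          have hfV := Finset.mem_product.1 (hD.edges_subset heE)
          have hx' := hmem.1
          have hy' := hmem.2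
          rw [hclus f.1 hfV.1] at hx'
          rw [hclus f.2 hfV.2] at hy'
          exact cover_sound hD heE hx' hy'
  refine ⟨V', A', E', hcomp, ?_, ?_⟩
  · -- cardinalities
    have hdisj : Disjoint A (C.image (fun s => (c, s))) := by
      rw [Finset.disjoint_right]
      intro p hp hpA
      obtain ⟨s, _, rfl⟩ := Finset.mem_image.1 hp
      exact (harcc _ hpA).1 rfl
    have hcardA : A'.card = A.card + C.card := by
      rw [hA', Finset.card_union_of_disjoint hdisj,
        Finset.card_image_of_injective _ (fun s t h => by injection h)]
    have hccE : (c, c) ∉ E \ S := by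
      intro h
      have := Finset.mem_product.1 (hD.edges_subset (Finset.mem_sdiff.1 h).1)
      exact hc this.1
    have hSdisj : Disjoint ((C.erase a).image (fun t => ((a : α), t)))
        ((C.erase a).image (fun t => (t, (a : α)))) := by
      rw [Finset.disjoint_left]
      intro p hp hp'
      obtain ⟨t, ht, rfl⟩ := Finset.mem_image.1 hp
      obtain ⟨t', ht', heq⟩ := Finset.mem_image.1 hp'
      injection heq with h1 _
      exact (Finset.mem_erase.1 ht').1 h1
    have haaS : ((a : α), (a : α)) ∉
        ((C.erase a).image (fun t => ((a : α), t))) ∪ ((C.erase a).image (fun t => (t, (a : α)))) := by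
      intro h
      rcases Finset.mem_union.1 h with h | h
      · obtain ⟨t, ht, heq⟩ := Finset.mem_image.1 h
        injection heq with _ h2
        exact (Finset.mem_erase.1 ht).1 h2
      · obtain ⟨t, ht, heq⟩ := Finset.mem_image.1 h
        injection heq with h2 _
        exact (Finset.mem_erase.1 ht).1 h2
    have hcardS : S.card = 2 * (C.card - 1) + 1 := by
      rw [hS, Finset.card_insert_of_notMem haaS, Finset.card_union_of_disjoint hSdisj,
        Finset.card_image_of_injective _ (fun s t h => by simpa using congrArg Prod.snd h),
        Finset.card_image_of_injective _ (fun s t h => by simpa using congrArg Prod.fst h),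
        Finset.card_erase_of_mem haC]
      omega
    have hcardE : E'.card = E.card - S.card + 1 := by
      rw [hE', Finset.card_insert_of_notMem hccE, Finset.card_sdiff_of_subset hSE]
    have hSle : S.card ≤ E.card := Finset.card_le_card hSE
    rw [hcardA, hcardE]
    omega
  · -- loops decrease
    intro e he
    have heE' : e ∈ E' := (Finset.mem_filter.1 he).1
    have hprop := (Finset.mem_filter.1 he).2
    rcases Finset.mem_insert.1 heE' with h | h
    · exfalso
      have : e.1 = c := by rw [h]
      exact hcVbar (this ▸ hprop.2.1)
    · have heE : e ∈ E := (Finset.mem_sdiff.1 h).1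
      have heS : e ∉ S := (Finset.mem_sdiff.1 h).2
      refine Finset.mem_erase.2 ⟨?_, Finset.mem_filter.2 ⟨heE, hprop⟩⟩
      intro heq
      exact heS (heq ▸ Finset.mem_insert_self _ _)

end Aux5
section Aux6

set_option linter.unusedSectionVars false

attribute [local instance] Classical.propDecidable

variable {α : Type*} [DecidableEq α]

lemma nl_lt_of_subset {Vbar : Finset α} {Ebar E E' : Finset (α × α)} {l : α × α}
    (h : loopSet Vbar Ebar E' ⊆ (loopSet Vbar Ebar E).erase l)
    (hl : l ∈ loopSet Vbar Ebar E) : nL Vbar Ebar E' < nL Vbar Ebar E := by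
  have h1 := Finset.card_le_card h
  rw [Finset.card_erase_of_mem hl] at h1
  have h2 := Finset.card_pos.2 ⟨l, hl⟩
  unfold nL
  omega

lemma loopSet_erase_subset {Vbar : Finset α} {Ebar E : Finset (α × α)} {l : α × α} :
    loopSet Vbar Ebar (E.erase l) ⊆ (loopSet Vbar Ebar E).erase l := by
  intro e he
  obtain ⟨he1, he2⟩ := Finset.mem_filter.1 he
  exact Finset.mem_erase.2 ⟨(Finset.mem_erase.1 he1).1,
    Finset.mem_filter.2 ⟨Finset.mem_of_mem_erase he1, he2⟩⟩

lemma loopSet_insert_nonloop {Vbar : Finset α} {Ebar E : Finset (α × α)} {p : α × α}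
    (hp : p.1 ≠ p.2) : loopSet Vbar Ebar (insert p E) ⊆ loopSet Vbar Ebar E := by
  intro e he
  obtain ⟨he1, he2⟩ := Finset.mem_filter.1 he
  rcases Finset.mem_insert.1 he1 with h | h
  · exact absurd (h ▸ he2.1) hp
  · exact Finset.mem_filter.2 ⟨h, he2⟩

/-- Phase 1: an optimal compression with multi-class sink loops can be improved. -/
lemma phase1 {α : Type*} [DecidableEq α] [Infinite α]
    {Vbar : Finset α} {Ebar : Finset (α × α)} {V : Finset α} {A E : Finset (α × α)}
    (hD : IsDagCompression Vbar Ebar V A E)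
    (hmin : ∀ (V' : Finset α) (A' E' : Finset (α × α)),
      IsDagCompression Vbar Ebar V' A' E' → A.card + E.card ≤ A'.card + E'.card)
    (hn : 0 < nL Vbar Ebar E) :
    ∃ (V' : Finset α) (A' E' : Finset (α × α)),
      IsDagCompression Vbar Ebar V' A' E' ∧
      A'.card + E'.card ≤ A.card + E.card ∧
      nL Vbar Ebar E' < nL Vbar Ebar E := by
  classical
  obtain ⟨l, hl⟩ := Finset.card_pos.1 hn
  obtain ⟨hlE, hll, hlV, hlk⟩ := Finset.mem_filter.1 hl
  set a := l.1 with haa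
  have hlaa : l = (a, a) := by
    rw [haa]; exact Prod.ext rfl hll.symm
  have ha : a ∈ Vbar := hlV
  have hloop : (a, a) ∈ E := hlaa ▸ hlE
  have hk : 2 ≤ (classOf Vbar Ebar a).card := hlk
  have hlLS : (a, a) ∈ loopSet Vbar Ebar E := hlaa ▸ hl
  have hUC : ∀ f ∈ E, f ≠ (a, a) → a ∈ Cluster Vbar A f.1 → a ∈ Cluster Vbar A f.2 → False :=
    fun f hf hne h1 h2 => second_cover_false hD hmin ha hloop hf hne h1 h2
  by_cases hc1 : ∃ f ∈ E, ∃ t ∈ (classOf Vbar Ebar a).erase a,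
      a ∈ Cluster Vbar A f.1 ∧ t ∈ Cluster Vbar A f.2 ∧ f.2 ∉ Vbar
  · obtain ⟨f, hf, t, htm, h1, h2, h3⟩ := hc1
    have hfV := Finset.mem_product.1 (hD.edges_subset hf)
    have hfne : f ≠ (a, a) := by
      intro h; exact h3 (h ▸ ha : f.2 ∈ Vbar)
    have hwa : (f.2, a) ∉ A := by
      intro h
      exact hUC f hf hfne h1 ⟨ha, Relation.ReflTransGen.single h⟩
    have htw : Twins Ebar a t := (mem_classOf.1 (Finset.mem_of_mem_erase htm)).2
    obtain ⟨hcomp, hcard⟩ := arc_exchange hD ha hloop hfV.2 h3 hwa h2 htw hf hfne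
      (cluster_mono (Finset.subset_insert _ _) h1)
      ⟨ha, Relation.ReflTransGen.single (Finset.mem_insert_self _ _)⟩
    exact ⟨V, _, _, hcomp, le_of_eq hcard,
      nl_lt_of_subset loopSet_erase_subset hlLS⟩
  by_cases hc2 : ∃ f ∈ E, ∃ t ∈ (classOf Vbar Ebar a).erase a,
      t ∈ Cluster Vbar A f.1 ∧ a ∈ Cluster Vbar A f.2 ∧ f.1 ∉ Vbar
  · obtain ⟨f, hf, t, htm, h1, h2, h3⟩ := hc2
    have hfV := Finset.mem_product.1 (hD.edges_subset hf)
    have hfne : f ≠ (a, a) := by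
      intro h; exact h3 (by rw [h]; exact ha)
    have hwa : (f.1, a) ∉ A := by
      intro h
      exact hUC f hf hfne ⟨ha, Relation.ReflTransGen.single h⟩ h2
    have htw : Twins Ebar a t := (mem_classOf.1 (Finset.mem_of_mem_erase htm)).2
    obtain ⟨hcomp, hcard⟩ := arc_exchange hD ha hloop hfV.1 h3 hwa h1 htw hf hfne
      ⟨ha, Relation.ReflTransGen.single (Finset.mem_insert_self _ _)⟩
      (cluster_mono (Finset.subset_insert _ _) h2)
    exact ⟨V, _, _, hcomp, le_of_eq hcard,
      nl_lt_of_subset loopSet_erase_subset hlLS⟩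
  by_cases hc3 : ∃ f ∈ E, ∃ t ∈ (classOf Vbar Ebar a).erase a,
      a ∈ Cluster Vbar A f.1 ∧ t ∈ Cluster Vbar A f.2 ∧ f.1 ≠ a
  · obtain ⟨f, hf, t, htm, h1, h2, h3⟩ := hc3
    have hfV := Finset.mem_product.1 (hD.edges_subset hf)
    have htw : Twins Ebar a t := (mem_classOf.1 (Finset.mem_of_mem_erase htm)).2
    have hne' : ((f.1, a) : α × α) ≠ (a, a) := by
      intro h; injection h with h1 _; exact h3 h1
    have hnotE : ((f.1, a) : α × α) ∉ E := by
      intro h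
      exact hUC (f.1, a) h hne' h1 (mem_cluster_self ha)
    have hsound : ∀ x y, x ∈ Cluster Vbar A f.1 → y ∈ Cluster Vbar A a → (x, y) ∈ Ebar := by
      intro x y hx hy
      have hya : y = a := cluster_sink_of_comp hD ha hy
      subst hya
      exact twins_pair_transfer (twins_refl _ _) (twins_symm htw) (cover_sound hD hf hx h2)
    obtain ⟨hcomp, hcard⟩ := replace_loop hD ha hloop hfV.1 (hD.vbar_subset ha) h1
      (mem_cluster_self ha) hsound hnotE
    refine ⟨V, A, _, hcomp, by omega, ?_⟩
    exact nl_lt_of_subset ((loopSet_insert_nonloop (by simpa using h3)).trans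
      loopSet_erase_subset) hlLS
  by_cases hc4 : ∃ f ∈ E, ∃ t ∈ (classOf Vbar Ebar a).erase a,
      t ∈ Cluster Vbar A f.1 ∧ a ∈ Cluster Vbar A f.2 ∧ f.2 ≠ a
  · obtain ⟨f, hf, t, htm, h1, h2, h3⟩ := hc4
    have hfV := Finset.mem_product.1 (hD.edges_subset hf)
    have htw : Twins Ebar a t := (mem_classOf.1 (Finset.mem_of_mem_erase htm)).2
    have hne' : ((a, f.2) : α × α) ≠ (a, a) := by
      intro h; injection h with _ h2'; exact h3 h2'
    have hnotE : ((a, f.2) : α × α) ∉ E := by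
      intro h
      exact hUC (a, f.2) h hne' (mem_cluster_self ha) h2
    have hsound : ∀ x y, x ∈ Cluster Vbar A a → y ∈ Cluster Vbar A f.2 → (x, y) ∈ Ebar := by
      intro x y hx hy
      have hxa : x = a := cluster_sink_of_comp hD ha hx
      subst hxa
      exact twins_pair_transfer (twins_symm htw) (twins_refl _ _) (cover_sound hD hf h1 hy)
    obtain ⟨hcomp, hcard⟩ := replace_loop hD ha hloop (hD.vbar_subset ha) hfV.2
      (mem_cluster_self ha) h2 hsound hnotE
    refine ⟨V, A, _, hcomp, by omega, ?_⟩
    exact nl_lt_of_subset ((loopSet_insert_nonloop (by simpa using fun h => h3 h.symm)).trans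
      loopSet_erase_subset) hlLS
  · -- stuck case
    have haa' : (a, a) ∈ Ebar :=
      cover_sound hD hloop (mem_cluster_self ha) (mem_cluster_self ha)
    have hstars : ∀ t ∈ (classOf Vbar Ebar a).erase a, (a, t) ∈ E ∧ (t, a) ∈ E := by
      intro t htm
      have htw : Twins Ebar a t := (mem_classOf.1 (Finset.mem_of_mem_erase htm)).2
      have htV : t ∈ Vbar := classOf_subset_vbar (Finset.mem_of_mem_erase htm)
      constructor
      · have hat : (a, t) ∈ Ebar := twins_pair_transfer (twins_refl _ _) htw haa'
        obtain ⟨f, hf, h1, h2⟩ := cover_ex hD hat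
        have hf2V : f.2 ∈ Vbar := by
          by_contra hnb
          exact hc1 ⟨f, hf, t, htm, h1, h2, hnb⟩
        have hft : t = f.2 := cluster_sink_of_comp hD hf2V h2
        have hf1a : f.1 = a := by
          by_contra hne
          exact hc3 ⟨f, hf, t, htm, h1, h2, hne⟩
        have : f = (a, t) := Prod.ext hf1a hft.symm
        exact this ▸ hf
      · have hta : (t, a) ∈ Ebar := twins_pair_transfer htw (twins_refl _ _) haa'
        obtain ⟨f, hf, h1, h2⟩ := cover_ex hD hta
        have hf1V : f.1 ∈ Vbar := by
          by_contra hnb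
          exact hc2 ⟨f, hf, t, htm, h1, h2, hnb⟩
        have hft : t = f.1 := cluster_sink_of_comp hD hf1V h1
        have hf2a : f.2 = a := by
          by_contra hne
          exact hc4 ⟨f, hf, t, htm, h1, h2, hne⟩
        have : f = (t, a) := Prod.ext hft.symm hf2a
        exact this ▸ hf
    obtain ⟨c, hc⟩ := Infinite.exists_notMem_finset V
    obtain ⟨V', A', E', hcomp, hcard, hsub⟩ := gadget_exchange hD ha hloop hk hstars hc
    exact ⟨V', A', E', hcomp, hcard, nl_lt_of_subset hsub hlLS⟩

end Aux6
section Aux7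

set_option linter.unusedSectionVars false

attribute [local instance] Classical.propDecidable

variable {α : Type*} [DecidableEq α]

/-- the representative map collapsing the class `C` to `r` -/
noncomputable def rho (C : Finset α) (r x : α) : α := if x ∈ C then r else x

/-- pulled-back arc set -/
noncomputable def pbA (Vbar V : Finset α) (A : Finset (α × α)) (C : Finset α) (r : α) :
    Finset (α × α) :=
  (A.filter fun p => p.2 ∉ Vbar) ∪ ((V ×ˢ Vbar).filter fun p => (p.1, rho C r p.2) ∈ A)

/-- pulled-back edge set -/
noncomputable def pbE (V : Finset α) (E : Finset (α × α)) (C : Finset α) (r : α) :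
    Finset (α × α) :=
  (V ×ˢ V).filter fun p => (rho C r p.1, rho C r p.2) ∈ E

lemma rho_idem {C : Finset α} {r : α} (hr : r ∈ C) (x : α) :
    rho C r (rho C r x) = rho C r x := by
  unfold rho
  by_cases hx : x ∈ C <;> simp [hx, hr]

lemma rho_of_mem {C : Finset α} {r x : α} (hx : x ∈ C) : rho C r x = r := if_pos hx

lemma rho_of_not_mem {C : Finset α} {r x : α} (hx : x ∉ C) : rho C r x = x := if_neg hx

lemma rho_mem_vbar {Vbar C : Finset α} {r x : α} (hC : C ⊆ Vbar) (hr : r ∈ C)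
    (hx : x ∈ Vbar) : rho C r x ∈ Vbar := by
  unfold rho
  by_cases h : x ∈ C
  · simpa [h] using hC hr
  · simpa [h] using hx

lemma mem_pbA_vbar {Vbar V : Finset α} {A : Finset (α × α)} {C : Finset α} {r : α}
    {u t : α} (ht : t ∈ Vbar) :
    (u, t) ∈ pbA Vbar V A C r ↔ u ∈ V ∧ (u, rho C r t) ∈ A := by
  unfold pbA
  simp only [Finset.mem_union, Finset.mem_filter, Finset.mem_product]
  constructor
  · rintro (⟨_, h2⟩ | ⟨⟨h1, _⟩, h3⟩)
    · exact absurd ht h2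
    · exact ⟨h1, h3⟩
  · rintro ⟨h1, h2⟩
    exact Or.inr ⟨⟨h1, ht⟩, h2⟩

lemma mem_pbA_nonvbar {Vbar V : Finset α} {A : Finset (α × α)} {C : Finset α} {r : α}
    {u t : α} (ht : t ∉ Vbar) :
    (u, t) ∈ pbA Vbar V A C r ↔ (u, t) ∈ A := by
  unfold pbA
  simp only [Finset.mem_union, Finset.mem_filter, Finset.mem_product]
  constructor
  · rintro (⟨h1, _⟩ | ⟨⟨_, h2⟩, _⟩)
    · exact h1
    · exact absurd h2 ht
  · intro h
    exact Or.inl ⟨h, ht⟩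

lemma pbA_no_out_vbar {Vbar : Finset α} {Ebar : Finset (α × α)} {V : Finset α}
    {A E : Finset (α × α)} (hD : IsDagCompression Vbar Ebar V A E)
    {C : Finset α} {r : α} {t : α} (ht : t ∈ Vbar) :
    ∀ u, (t, u) ∉ pbA Vbar V A C r := by
  intro u hu
  unfold pbA at hu
  rcases Finset.mem_union.1 hu with h | h
  · exact sink_no_out hD ht _ (Finset.mem_filter.1 h).1
  · exact sink_no_out hD ht _ (Finset.mem_filter.1 h).2

lemma pbA_subset {Vbar : Finset α} {Ebar : Finset (α × α)} {V : Finset α}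
    {A E : Finset (α × α)} (hD : IsDagCompression Vbar Ebar V A E) {C : Finset α} {r : α} :
    pbA Vbar V A C r ⊆ V ×ˢ V := by
  intro p hp
  unfold pbA at hp
  rcases Finset.mem_union.1 hp with h | h
  · exact hD.arcs_subset (Finset.mem_filter.1 h).1
  · obtain ⟨h1, _⟩ := Finset.mem_filter.1 h
    obtain ⟨h2, h3⟩ := Finset.mem_product.1 h1
    exact Finset.mem_product.2 ⟨h2, hD.vbar_subset h3⟩

lemma pbA_tg_nonvbar {Vbar : Finset α} {Ebar : Finset (α × α)} {V : Finset α}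
    {A E : Finset (α × α)} (hD : IsDagCompression Vbar Ebar V A E) {C : Finset α} {r : α}
    {x s : α} (h : Relation.TransGen (ArcRel (pbA Vbar V A C r)) x s) (hs : s ∉ Vbar) :
    Relation.TransGen (ArcRel A) x s := by
  induction h with
  | single harc =>
    exact Relation.TransGen.single ((mem_pbA_nonvbar hs).1 harc)
  | @tail y s' hxy harc ih =>
    have hs'A : (y, s') ∈ A := (mem_pbA_nonvbar hs).1 harc
    have hy : y ∉ Vbar := by
      intro hyv
      exact pbA_no_out_vbar hD hyv s' harc
    exact (ih hy).tail hs'A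

lemma pbA_acyclic {Vbar : Finset α} {Ebar : Finset (α × α)} {V : Finset α}
    {A E : Finset (α × α)} (hD : IsDagCompression Vbar Ebar V A E) {C : Finset α} {r : α} :
    ∀ v, ¬ Relation.TransGen (ArcRel (pbA Vbar V A C r)) v v := by
  intro v hv
  by_cases hvb : v ∈ Vbar
  · obtain ⟨b, hb, _⟩ := Relation.TransGen.head'_iff.1 hv
    exact pbA_no_out_vbar hD hvb b hb
  · exact hD.acyclic v (pbA_tg_nonvbar hD hv hvb)

/-- cluster of a sink in the pulled-back arc set -/
lemma pbA_cluster_sink {Vbar : Finset α} {Ebar : Finset (α × α)} {V : Finset α}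
    {A E : Finset (α × α)} (hD : IsDagCompression Vbar Ebar V A E) {C : Finset α} {r : α}
    {t x : α} (ht : t ∈ Vbar) (hx : x ∈ Cluster Vbar (pbA Vbar V A C r) t) : x = t :=
  cluster_sink (pbA_no_out_vbar hD ht) hx

/-- prefix paths avoiding `Vbar` lift to the pullback -/
lemma pbA_rtg_of_rtg {Vbar : Finset α} {Ebar : Finset (α × α)} {V : Finset α}
    {A E : Finset (α × α)} (hD : IsDagCompression Vbar Ebar V A E) {C : Finset α} {r : α}
    {p q : α} (h : Relation.ReflTransGen (ArcRel A) p q) (hq : q ∉ Vbar) :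
    Relation.ReflTransGen (ArcRel (pbA Vbar V A C r)) p q := by
  induction h with
  | refl => exact Relation.ReflTransGen.refl
  | @tail y s' hxy harc ih =>
    have hy : y ∉ Vbar := fun hyv => sink_no_out hD hyv s' harc
    exact (ih hy).tail ((mem_pbA_nonvbar hq).2 harc)

/-- cluster characterization for non-sinks -/
lemma pbA_cluster_char {Vbar : Finset α} {Ebar : Finset (α × α)} {V : Finset α}
    {A E : Finset (α × α)} (hD : IsDagCompression Vbar Ebar V A E) {C : Finset α} {r : α}
    (hCsub : C ⊆ Vbar) (hr : r ∈ C) {u : α} (hu : u ∉ Vbar) (x : α) :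
    x ∈ Cluster Vbar (pbA Vbar V A C r) u ↔
      x ∈ Vbar ∧ rho C r x ∈ Cluster Vbar A u := by
  constructor
  · rintro ⟨hxv, hreach⟩
    refine ⟨hxv, rho_mem_vbar hCsub hr hxv, ?_⟩
    have fwd : ∀ p, Relation.ReflTransGen (ArcRel (pbA Vbar V A C r)) p x → p ∉ Vbar →
        Relation.ReflTransGen (ArcRel A) p (rho C r x) := by
      intro p hp
      induction hp using Relation.ReflTransGen.head_induction_on with
      | refl => exact fun h => absurd hxv h
      | @head a c harc hrest ih =>
        intro hav
        by_cases hcv : c ∈ Vbar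
        · have hxc : x = c := rtg_sink_eq (pbA_no_out_vbar hD hcv) hrest
          have harc' : (a, rho C r c) ∈ A := ((mem_pbA_vbar hcv).1 harc).2
          rw [hxc]
          exact Relation.ReflTransGen.single harc'
        · exact Relation.ReflTransGen.head ((mem_pbA_nonvbar hcv).1 harc) (ih hcv)
    exact fwd u hreach hu
  · rintro ⟨hxv, _, hreach⟩
    refine ⟨hxv, ?_⟩
    rcases Relation.ReflTransGen.cases_tail hreach with heq | ⟨w, hw, harc⟩
    · exact absurd (heq ▸ rho_mem_vbar hCsub hr hxv) hu
    · have hwV : w ∈ V := (Finset.mem_product.1 (hD.arcs_subset harc)).1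
      have hwv : w ∉ Vbar := fun h => sink_no_out hD h _ harc
      exact (pbA_rtg_of_rtg hD hw hwv).tail ((mem_pbA_vbar hxv).2 ⟨hwV, harc⟩)

end Aux7
section Aux8

set_option linter.unusedSectionVars false

attribute [local instance] Classical.propDecidable

variable {α : Type*} [DecidableEq α]

lemma mem_pbE {V : Finset α} {E : Finset (α × α)} {C : Finset α} {r : α} {u v : α} :
    (u, v) ∈ pbE V E C r ↔ u ∈ V ∧ v ∈ V ∧ (rho C r u, rho C r v) ∈ E := by
  unfold pbE
  simp only [Finset.mem_filter, Finset.mem_product]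
  tauto

lemma rho_twins {Vbar : Finset α} {Ebar : Finset (α × α)} {t₀ : α} {C : Finset α} {r : α}
    (hC : C = classOf Vbar Ebar t₀) (hr : r ∈ C) (x : α) : Twins Ebar x (rho C r x) := by
  by_cases hx : x ∈ C
  · rw [rho_of_mem hx]
    have h1 : Twins Ebar t₀ x := (mem_classOf.1 (hC ▸ hx)).2
    have h2 : Twins Ebar t₀ r := (mem_classOf.1 (hC ▸ hr)).2
    exact twins_trans (twins_symm h1) h2
  · rw [rho_of_not_mem hx]
    exact twins_refl _ _

lemma pb_represents {Vbar : Finset α} {Ebar : Finset (α × α)} {V : Finset α}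
    {A E : Finset (α × α)} (hD : IsDagCompression Vbar Ebar V A E)
    (hE : Ebar ⊆ Vbar ×ˢ Vbar) {t₀ : α} {C : Finset α} {r : α}
    (hC : C = classOf Vbar Ebar t₀) (hCsub : C ⊆ Vbar) (hr : r ∈ C) :
    (↑Ebar : Set (α × α)) = ⋃ e ∈ pbE V E C r,
      (Cluster Vbar (pbA Vbar V A C r) e.1) ×ˢ (Cluster Vbar (pbA Vbar V A C r) e.2) := by
  ext ⟨x, y⟩
  constructor
  · intro hxy
    have hxy' : (x, y) ∈ Ebar := hxy
    have hxV : x ∈ Vbar := (Finset.mem_product.1 (hE hxy')).1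
    have hyV : y ∈ Vbar := (Finset.mem_product.1 (hE hxy')).2
    have hrr : (rho C r x, rho C r y) ∈ Ebar :=
      twins_pair_transfer (rho_twins hC hr x) (rho_twins hC hr y) hxy'
    obtain ⟨f, hf, hf1, hf2⟩ := cover_ex hD hrr
    have hfV := Finset.mem_product.1 (hD.edges_subset hf)
    set u' := if f.1 ∈ Vbar then x else f.1 with hu'
    set v' := if f.2 ∈ Vbar then y else f.2 with hv'
    have hu'V : u' ∈ V := by
      rw [hu']; split
      · exact hD.vbar_subset hxV
      · exact hfV.1
    have hv'V : v' ∈ V := by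
      rw [hv']; split
      · exact hD.vbar_subset hyV
      · exact hfV.2
    have hru : rho C r u' = f.1 := by
      rw [hu']; split
      · rename_i hb
        exact (cluster_sink_of_comp hD hb hf1).symm ▸ rfl
      · rename_i hb
        exact rho_of_not_mem (fun h => hb (hCsub h))
    have hrv : rho C r v' = f.2 := by
      rw [hv']; split
      · rename_i hb
        exact (cluster_sink_of_comp hD hb hf2).symm ▸ rfl
      · rename_i hb
        exact rho_of_not_mem (fun h => hb (hCsub h))
    refine Set.mem_iUnion₂.2 ⟨(u', v'), mem_pbE.2 ⟨hu'V, hv'V, ?_⟩, Set.mk_mem_prod ?_ ?_⟩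
    · rw [hru, hrv]
      exact hf
    · show x ∈ Cluster Vbar (pbA Vbar V A C r) u'
      rw [hu']; split
      · exact ⟨hxV, Relation.ReflTransGen.refl⟩
      · rename_i hb
        exact (pbA_cluster_char hD hCsub hr hb x).2 ⟨hxV, hf1⟩
    · show y ∈ Cluster Vbar (pbA Vbar V A C r) v'
      rw [hv']; split
      · exact ⟨hyV, Relation.ReflTransGen.refl⟩
      · rename_i hb
        exact (pbA_cluster_char hD hCsub hr hb y).2 ⟨hyV, hf2⟩
  · intro hxy
    obtain ⟨e, he, hmem⟩ := Set.mem_iUnion₂.1 hxy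
    obtain ⟨he1, he2, heE⟩ := mem_pbE.1 (show (e.1, e.2) ∈ pbE V E C r from by
      simpa using he)
    have hx := hmem.1
    have hy := hmem.2
    have claim1 : x ∈ Vbar ∧ rho C r x ∈ Cluster Vbar A (rho C r e.1) := by
      by_cases hb : e.1 ∈ Vbar
      · have hxe : x = e.1 := pbA_cluster_sink hD hb hx
        subst hxe
        exact ⟨hb, mem_cluster_self (rho_mem_vbar hCsub hr hb)⟩
      · have h := (pbA_cluster_char hD hCsub hr hb x).1 hx
        rw [rho_of_not_mem (fun h' => hb (hCsub h'))]
        exact ⟨h.1, h.2⟩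
    have claim2 : y ∈ Vbar ∧ rho C r y ∈ Cluster Vbar A (rho C r e.2) := by
      by_cases hb : e.2 ∈ Vbar
      · have hye : y = e.2 := pbA_cluster_sink hD hb hy
        subst hye
        exact ⟨hb, mem_cluster_self (rho_mem_vbar hCsub hr hb)⟩
      · have h := (pbA_cluster_char hD hCsub hr hb y).1 hy
        rw [rho_of_not_mem (fun h' => hb (hCsub h'))]
        exact ⟨h.1, h.2⟩
    have hrr : (rho C r x, rho C r y) ∈ Ebar :=
      cover_sound hD heE claim1.2 claim2.2
    exact twins_pair_transfer (twins_symm (rho_twins hC hr x))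
      (twins_symm (rho_twins hC hr y)) hrr

/-- generic pruning of dead vertices -/
lemma prune (Vbar : Finset α) (Ebar : Finset (α × α)) (V : Finset α) (A E : Finset (α × α))
    (hvb : Vbar ⊆ V) (harcs : A ⊆ V ×ˢ V)
    (hacy : ∀ v, ¬ Relation.TransGen (ArcRel A) v v)
    (hnoout : ∀ t ∈ Vbar, ∀ u, (t, u) ∉ A) (hedges : E ⊆ V ×ˢ V)
    (hrep : (↑Ebar : Set (α × α)) =
      ⋃ e ∈ E, (Cluster Vbar A e.1) ×ˢ (Cluster Vbar A e.2)) :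
    ∃ (V' : Finset α) (A' E' : Finset (α × α)),
      IsDagCompression Vbar Ebar V' A' E' ∧ A'.card ≤ A.card ∧ E'.card ≤ E.card ∧
      A' = A.filter (fun p => p.1 ∈ V' ∧ p.2 ∈ V') ∧
      E' = E.filter (fun p => p.1 ∈ V' ∧ p.2 ∈ V') ∧ Vbar ⊆ V' := by
  classical
  set V' := V.filter (fun v => v ∈ Vbar ∨ ∃ t ∈ Vbar, Relation.ReflTransGen (ArcRel A) v t)
    with hV'
  set A' := A.filter (fun p => p.1 ∈ V' ∧ p.2 ∈ V') with hA'
  set E' := E.filter (fun p => p.1 ∈ V' ∧ p.2 ∈ V') with hE'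
  have hVbV' : Vbar ⊆ V' := by
    intro t ht
    exact Finset.mem_filter.2 ⟨hvb ht, Or.inl ht⟩
  have hK : ∀ p x, Relation.ReflTransGen (ArcRel A) p x → x ∈ Vbar → p ∈ V →
      Relation.ReflTransGen (ArcRel A') p x := by
    intro p x hp hxV
    induction hp using Relation.ReflTransGen.head_induction_on with
    | refl => exact fun _ => Relation.ReflTransGen.refl
    | @head a c harc hrest ih =>
      intro haV
      have hcV : c ∈ V := (Finset.mem_product.1 (harcs harc)).2
      have harc' : (a, c) ∈ A' := by
        refine Finset.mem_filter.2 ⟨harc, ?_, ?_⟩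
        · exact Finset.mem_filter.2 ⟨haV, Or.inr ⟨x, hxV, Relation.ReflTransGen.head harc hrest⟩⟩
        · exact Finset.mem_filter.2 ⟨hcV, Or.inr ⟨x, hxV, hrest⟩⟩
      exact Relation.ReflTransGen.head harc' (ih hcV)
  have hsubA : A' ⊆ A := Finset.filter_subset _ _
  refine ⟨V', A', E', ⟨hVbV', ?_, ?_, ?_, ?_, ?_⟩, Finset.card_le_card hsubA,
    Finset.card_le_card (Finset.filter_subset _ _), rfl, rfl, hVbV'⟩
  · intro p hp
    obtain ⟨_, h1, h2⟩ := Finset.mem_filter.1 hp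
    exact Finset.mem_product.2 ⟨h1, h2⟩
  · intro v hv
    exact hacy v (Relation.TransGen.mono (r := ArcRel A') (p := ArcRel A) (fun a b h => hsubA h) _ _ hv)
  · intro v hv
    obtain ⟨hvV, hP⟩ := Finset.mem_filter.1 hv
    constructor
    · intro hno
      by_contra hnb
      rcases hP with h | ⟨t, htV, hreach⟩
      · exact hnb h
      · rcases Relation.ReflTransGen.cases_head hreach with heq | ⟨c, harc, hrest⟩
        · exact hnb (heq ▸ htV)
        · have hcV : c ∈ V := (Finset.mem_product.1 (harcs harc)).2
          refine hno c (Finset.mem_filter.2 ⟨harc, hv, ?_⟩)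
          exact Finset.mem_filter.2 ⟨hcV, Or.inr ⟨t, htV, hrest⟩⟩
    · intro hvb' u hu
      exact hnoout v hvb' u (hsubA hu)
  · intro p hp
    obtain ⟨_, h1, h2⟩ := Finset.mem_filter.1 hp
    exact Finset.mem_product.2 ⟨h1, h2⟩
  · ext ⟨x, y⟩
    constructor
    · intro hxy
      have hxy' : ((x, y) : α × α) ∈ (↑Ebar : Set (α × α)) := hxy
      rw [hrep] at hxy'
      obtain ⟨f, hf, hmem⟩ := Set.mem_iUnion₂.1 hxy'
      have hfV := Finset.mem_product.1 (hedges hf)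
      have hx := hmem.1
      have hy := hmem.2
      have hf1 : f.1 ∈ V' := Finset.mem_filter.2 ⟨hfV.1, Or.inr ⟨x, hx.1, hx.2⟩⟩
      have hf2 : f.2 ∈ V' := Finset.mem_filter.2 ⟨hfV.2, Or.inr ⟨y, hy.1, hy.2⟩⟩
      refine Set.mem_iUnion₂.2 ⟨f, Finset.mem_filter.2 ⟨hf, hf1, hf2⟩,
        Set.mk_mem_prod ⟨hx.1, hK f.1 x hx.2 hx.1 hfV.1⟩ ⟨hy.1, hK f.2 y hy.2 hy.1 hfV.2⟩⟩
    · intro hxy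
      obtain ⟨f, hf, hmem⟩ := Set.mem_iUnion₂.1 hxy
      have hfE : f ∈ E := (Finset.mem_filter.1 hf).1
      rw [hrep]
      exact Set.mem_iUnion₂.2 ⟨f, hfE, Set.mk_mem_prod
        ⟨hmem.1.1, Relation.ReflTransGen.mono (r := ArcRel A') (p := ArcRel A) (fun a b h => hsubA h) _ _ hmem.1.2⟩
        ⟨hmem.2.1, Relation.ReflTransGen.mono (r := ArcRel A') (p := ArcRel A) (fun a b h => hsubA h) _ _ hmem.2.2⟩⟩

end Aux8
section Aux9

set_option linter.unusedSectionVars false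
set_option maxHeartbeats 1000000

attribute [local instance] Classical.propDecidable

variable {α : Type*} [DecidableEq α]

lemma rho_fiber_not_mem {V C : Finset α} {r x : α} (hr : r ∈ C) (hx : x ∈ V) (hxC : x ∉ C) :
    V.filter (fun u => rho C r u = x) = {x} := by
  ext u
  simp only [Finset.mem_filter, Finset.mem_singleton]
  constructor
  · rintro ⟨huV, hrho⟩
    by_cases huC : u ∈ C
    · rw [rho_of_mem huC] at hrho
      exact absurd (hrho ▸ hr) hxC
    · rwa [rho_of_not_mem huC] at hrho
  · rintro rfl
    exact ⟨hx, rho_of_not_mem hxC⟩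

lemma rho_fiber_mem {Vbar V C : Finset α} {r x : α} (hCsub : C ⊆ Vbar) (hVsub : Vbar ⊆ V)
    (hr : r ∈ C) (hxC : x ∈ C) :
    V.filter (fun u => rho C r u = x) = if r = x then C else ∅ := by
  split
  · rename_i hrx
    ext u
    simp only [Finset.mem_filter]
    constructor
    · rintro ⟨huV, hrho⟩
      by_cases huC : u ∈ C
      · exact huC
      · rw [rho_of_not_mem huC] at hrho
        exact absurd (hrho ▸ hxC) huC
    · intro huC
      exact ⟨hVsub (hCsub huC), (rho_of_mem huC).trans hrx⟩
  · rename_i hrx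
    ext u
    simp only [Finset.mem_filter, Finset.notMem_empty, iff_false, not_and]
    intro huV hrho
    by_cases huC : u ∈ C
    · rw [rho_of_mem huC] at hrho
      exact hrx hrho
    · rw [rho_of_not_mem huC] at hrho
      exact huC (hrho ▸ hxC)

lemma pb_count {Vbar : Finset α} {Ebar : Finset (α × α)} {V : Finset α}
    {A E : Finset (α × α)} (hD : IsDagCompression Vbar Ebar V A E)
    (hnL : nL Vbar Ebar E = 0) {t₀ : α} {C : Finset α}
    (hC : C = classOf Vbar Ebar t₀) (hCsub : C ⊆ Vbar) (hk : 2 ≤ C.card) :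
    ∃ r ∈ C, (pbA Vbar V A C r).card + (pbE V E C r).card ≤ A.card + E.card := by
  classical
  -- (a) card bound for pbA
  have hcardA2 : ∀ r : α, (((V ×ˢ Vbar).filter fun p => (p.1, rho C r p.2) ∈ A)).card =
      ∑ t ∈ Vbar, (V.filter fun u => (u, rho C r t) ∈ A).card := by
    intro r
    rw [Finset.card_eq_sum_card_fiberwise (f := Prod.snd) (t := Vbar) (fun p hp =>
      (Finset.mem_product.1 (Finset.mem_filter.1 hp).1).2)]
    refine Finset.sum_congr rfl fun t ht => ?_
    have heq : (((V ×ˢ Vbar).filter fun p => (p.1, rho C r p.2) ∈ A).filter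
        fun p => p.2 = t) = (V.filter fun u => (u, rho C r t) ∈ A).image (fun u => (u, t)) := by
      ext p
      simp only [Finset.mem_filter, Finset.mem_product, Finset.mem_image]
      constructor
      · rintro ⟨⟨⟨h1, _⟩, h3⟩, h4⟩
        exact ⟨p.1, ⟨h1, h4 ▸ h3⟩, by rw [← h4]⟩
      · rintro ⟨u, ⟨h1, h2⟩, rfl⟩
        exact ⟨⟨⟨h1, ht⟩, h2⟩, rfl⟩
    rw [heq, Finset.card_image_of_injective _ (fun u v h => by injection h)]
  have hcardpbA : ∀ r : α, (pbA Vbar V A C r).card ≤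
      (A.filter fun p => p.2 ∉ Vbar).card +
        ∑ t ∈ Vbar, (V.filter fun u => (u, rho C r t) ∈ A).card := by
    intro r
    unfold pbA
    exact le_trans (Finset.card_union_le _ _) (by rw [hcardA2 r])
  -- (b) card of A
  have hcardA : A.card = (A.filter fun p => p.2 ∉ Vbar).card +
      ∑ t ∈ Vbar, (V.filter fun u => (u, t) ∈ A).card := by
    have hsplit := Finset.card_filter_add_card_filter_not
      (s := A) (p := fun p => p.2 ∉ Vbar)
    have hfib : (A.filter fun p => ¬ p.2 ∉ Vbar).card =
        ∑ t ∈ Vbar, (V.filter fun u => (u, t) ∈ A).card := by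
      rw [Finset.card_eq_sum_card_fiberwise (f := Prod.snd) (t := Vbar) (fun p hp => by
        have := (Finset.mem_filter.1 hp).2
        simpa using this)]
      refine Finset.sum_congr rfl fun t ht => ?_
      have heq : ((A.filter fun p => ¬ p.2 ∉ Vbar).filter fun p => p.2 = t) =
          (V.filter fun u => (u, t) ∈ A).image (fun u => (u, t)) := by
        ext p
        simp only [Finset.mem_filter, Finset.mem_image, not_not]
        constructor
        · rintro ⟨⟨h1, _⟩, h3⟩
          exact ⟨p.1, ⟨(Finset.mem_product.1 (hD.arcs_subset h1)).1, h3 ▸ h1⟩, by rw [← h3]⟩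
        · rintro ⟨u, ⟨h1, h2⟩, rfl⟩
          exact ⟨⟨h2, ht⟩, rfl⟩
      rw [heq, Finset.card_image_of_injective _ (fun u v h => by injection h)]
    omega
  -- (c) sum over representatives of the A-part
  have hfilC : Vbar.filter (fun t => t ∈ C) = C := by
    ext t
    simp only [Finset.mem_filter]
    exact ⟨fun h => h.2, fun h => ⟨hCsub h, h⟩⟩
  have hsumA : ∑ r ∈ C, (∑ t ∈ Vbar, (V.filter fun u => (u, rho C r t) ∈ A).card) =
      C.card * ∑ t ∈ Vbar, (V.filter fun u => (u, t) ∈ A).card := by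
    rw [Finset.sum_comm, ← Finset.sum_filter_add_sum_filter_not Vbar (fun t => t ∈ C)]
    have hfirst : (∑ t ∈ Vbar.filter (fun t => t ∈ C),
        ∑ r ∈ C, (V.filter fun u => (u, rho C r t) ∈ A).card) =
        C.card * ∑ r ∈ C, (V.filter fun u => (u, r) ∈ A).card := by
      rw [hfilC]
      calc (∑ t ∈ C, ∑ r ∈ C, (V.filter fun u => (u, rho C r t) ∈ A).card)
          = ∑ _t ∈ C, ∑ r ∈ C, (V.filter fun u => (u, r) ∈ A).card :=
            Finset.sum_congr rfl fun t htC =>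
              Finset.sum_congr rfl fun r _ => by rw [rho_of_mem htC]
        _ = _ := by rw [Finset.sum_const, smul_eq_mul]
    have hsecond : (∑ t ∈ Vbar.filter (fun t => ¬ t ∈ C),
        ∑ r ∈ C, (V.filter fun u => (u, rho C r t) ∈ A).card) =
        C.card * ∑ t ∈ Vbar.filter (fun t => ¬ t ∈ C),
          (V.filter fun u => (u, t) ∈ A).card := by
      rw [Finset.mul_sum]
      refine Finset.sum_congr rfl fun t htC => ?_
      have htC' : t ∉ C := (Finset.mem_filter.1 htC).2
      calc (∑ r ∈ C, (V.filter fun u => (u, rho C r t) ∈ A).card)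
          = ∑ _r ∈ C, (V.filter fun u => (u, t) ∈ A).card :=
            Finset.sum_congr rfl fun r _ => by rw [rho_of_not_mem htC']
        _ = _ := by rw [Finset.sum_const, smul_eq_mul]
    rw [hfirst, hsecond]
    have hsplit2 : (∑ t ∈ Vbar, (V.filter fun u => (u, t) ∈ A).card) =
        (∑ t ∈ C, (V.filter fun u => (u, t) ∈ A).card) +
          ∑ t ∈ Vbar.filter (fun t => ¬ t ∈ C), (V.filter fun u => (u, t) ∈ A).card := by
      conv_lhs => rw [← Finset.sum_filter_add_sum_filter_not Vbar (fun t => t ∈ C), hfilC]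
    rw [hsplit2, Nat.mul_add]
  -- (d) pbE cards as fiber sums
  have hcardpbE : ∀ r : α, (pbE V E C r).card = ∑ f ∈ E,
      (V.filter fun u => rho C r u = f.1).card * (V.filter fun u => rho C r u = f.2).card := by
    intro r
    have hmap : ∀ p ∈ pbE V E C r, ((fun p : α × α => (rho C r p.1, rho C r p.2)) p) ∈ E :=
      fun p hp => (Finset.mem_filter.1 hp).2
    rw [Finset.card_eq_sum_card_fiberwise hmap]
    refine Finset.sum_congr rfl fun f hf => ?_
    have heq : ((pbE V E C r).filter fun p => (rho C r p.1, rho C r p.2) = f) =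
        (V.filter fun u => rho C r u = f.1) ×ˢ (V.filter fun u => rho C r u = f.2) := by
      ext p
      unfold pbE
      simp only [Finset.mem_filter, Finset.mem_product]
      constructor
      · rintro ⟨⟨⟨h1, h2⟩, _⟩, h4⟩
        rw [Prod.ext_iff] at h4
        exact ⟨⟨h1, h4.1⟩, h2, h4.2⟩
      · rintro ⟨⟨h1, h2⟩, h3, h4⟩
        have hpair : ((rho C r p.1, rho C r p.2) : α × α) = f := by
          rw [h2, h4]
        exact ⟨⟨⟨h1, h3⟩, hpair ▸ hf⟩, hpair⟩
    rw [heq, Finset.card_product]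
  -- (e) per-edge bound over representatives
  have hedge : ∀ f ∈ E, (∑ r ∈ C,
      (V.filter fun u => rho C r u = f.1).card * (V.filter fun u => rho C r u = f.2).card)
      ≤ C.card := by
    intro f hf
    have hfV := Finset.mem_product.1 (hD.edges_subset hf)
    by_cases h1 : f.1 ∈ C <;> by_cases h2 : f.2 ∈ C
    · by_cases h12 : f.1 = f.2
      · exfalso
        have hcls : classOf Vbar Ebar f.1 = C := by
          have htw : Twins Ebar t₀ f.1 := (mem_classOf.1 (hC ▸ h1)).2
          rw [hC]
          exact (classOf_eq_of_twins htw).symm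
        have hfl : f ∈ loopSet Vbar Ebar E :=
          Finset.mem_filter.2 ⟨hf, h12, hCsub h1, by rw [hcls]; exact hk⟩
        have hempty := Finset.card_eq_zero.1 hnL
        rw [hempty] at hfl
        exact Finset.notMem_empty _ hfl
      · have hzero : ∀ r ∈ C,
            (V.filter fun u => rho C r u = f.1).card *
              (V.filter fun u => rho C r u = f.2).card = 0 := by
          intro r hr
          rw [rho_fiber_mem hCsub hD.vbar_subset hr h1,
            rho_fiber_mem hCsub hD.vbar_subset hr h2]
          by_cases hr1 : r = f.1
          · have hr2 : ¬ r = f.2 := fun h => h12 (hr1 ▸ h)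
            rw [if_pos hr1, if_neg hr2, Finset.card_empty, Nat.mul_zero]
          · rw [if_neg hr1, Finset.card_empty, Nat.zero_mul]
        rw [Finset.sum_congr rfl hzero, Finset.sum_const_zero]
        omega
    · have hterm : ∀ r ∈ C,
          (V.filter fun u => rho C r u = f.1).card *
            (V.filter fun u => rho C r u = f.2).card =
          if r = f.1 then C.card else 0 := by
        intro r hr
        rw [rho_fiber_mem hCsub hD.vbar_subset hr h1, rho_fiber_not_mem hr hfV.2 h2,
          Finset.card_singleton, Nat.mul_one]
        split <;> simp_all
      rw [Finset.sum_congr rfl hterm, Finset.sum_ite_eq' C f.1 (fun _ => C.card)]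
      simp [h1]
    · have hterm : ∀ r ∈ C,
          (V.filter fun u => rho C r u = f.1).card *
            (V.filter fun u => rho C r u = f.2).card =
          if r = f.2 then C.card else 0 := by
        intro r hr
        rw [rho_fiber_mem hCsub hD.vbar_subset hr h2, rho_fiber_not_mem hr hfV.1 h1,
          Finset.card_singleton, Nat.one_mul]
        split <;> simp_all
      rw [Finset.sum_congr rfl hterm, Finset.sum_ite_eq' C f.2 (fun _ => C.card)]
      simp [h2]
    · have hterm : ∀ r ∈ C,
          (V.filter fun u => rho C r u = f.1).card *
            (V.filter fun u => rho C r u = f.2).card = 1 := by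
        intro r hr
        rw [rho_fiber_not_mem hr hfV.1 h1, rho_fiber_not_mem hr hfV.2 h2]
        simp
      rw [Finset.sum_congr rfl hterm, Finset.sum_const, smul_eq_mul, Nat.mul_one]
  -- combine
  have htot : (∑ r ∈ C, ((pbA Vbar V A C r).card + (pbE V E C r).card)) ≤
      C.card * (A.card + E.card) := by
    rw [Finset.sum_add_distrib]
    have hA : (∑ r ∈ C, (pbA Vbar V A C r).card) ≤
        C.card * ((A.filter fun p => p.2 ∉ Vbar).card +
          ∑ t ∈ Vbar, (V.filter fun u => (u, t) ∈ A).card) := by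
      calc (∑ r ∈ C, (pbA Vbar V A C r).card)
          ≤ ∑ r ∈ C, ((A.filter fun p => p.2 ∉ Vbar).card +
              ∑ t ∈ Vbar, (V.filter fun u => (u, rho C r t) ∈ A).card) :=
            Finset.sum_le_sum fun r _ => hcardpbA r
        _ = C.card * (A.filter fun p => p.2 ∉ Vbar).card +
              ∑ r ∈ C, (∑ t ∈ Vbar, (V.filter fun u => (u, rho C r t) ∈ A).card) := by
            rw [Finset.sum_add_distrib, Finset.sum_const, smul_eq_mul]
        _ = C.card * (A.filter fun p => p.2 ∉ Vbar).card +
              C.card * ∑ t ∈ Vbar, (V.filter fun u => (u, t) ∈ A).card := by rw [hsumA]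
        _ = _ := by rw [Nat.mul_add]
    have hEbound : (∑ r ∈ C, (pbE V E C r).card) ≤ C.card * E.card := by
      calc (∑ r ∈ C, (pbE V E C r).card)
          = ∑ r ∈ C, ∑ f ∈ E, (V.filter fun u => rho C r u = f.1).card *
              (V.filter fun u => rho C r u = f.2).card :=
            Finset.sum_congr rfl fun r _ => hcardpbE r
        _ = ∑ f ∈ E, ∑ r ∈ C, (V.filter fun u => rho C r u = f.1).card *
              (V.filter fun u => rho C r u = f.2).card := Finset.sum_comm
        _ ≤ ∑ f ∈ E, C.card := Finset.sum_le_sum hedge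
        _ = E.card * C.card := by rw [Finset.sum_const, smul_eq_mul]
        _ = C.card * E.card := Nat.mul_comm _ _
    calc (∑ r ∈ C, (pbA Vbar V A C r).card) + (∑ r ∈ C, (pbE V E C r).card)
        ≤ C.card * ((A.filter fun p => p.2 ∉ Vbar).card +
            ∑ t ∈ Vbar, (V.filter fun u => (u, t) ∈ A).card) + C.card * E.card :=
          Nat.add_le_add hA hEbound
      _ = C.card * (A.card + E.card) := by rw [← hcardA, ← Nat.mul_add]
  by_contra hno
  push_neg at hno
  have hlow : ∀ r ∈ C, A.card + E.card + 1 ≤ (pbA Vbar V A C r).card + (pbE V E C r).card :=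
    fun r hr => hno r hr
  have hsumlow : C.card * (A.card + E.card + 1) ≤
      ∑ r ∈ C, ((pbA Vbar V A C r).card + (pbE V E C r).card) := by
    calc C.card * (A.card + E.card + 1) = ∑ _r ∈ C, (A.card + E.card + 1) := by
          rw [Finset.sum_const, smul_eq_mul]
      _ ≤ _ := Finset.sum_le_sum hlow
  have := le_trans hsumlow htot
  rw [Nat.mul_succ] at this
  omega

end Aux9
section Aux10

set_option linter.unusedSectionVars false
set_option maxHeartbeats 1000000

attribute [local instance] Classical.propDecidable

variable {α : Type*} [DecidableEq α]

lemma pullback_step {Vbar : Finset α} {Ebar : Finset (α × α)} {V : Finset α}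
    {A E : Finset (α × α)} (hD : IsDagCompression Vbar Ebar V A E)
    (hE : Ebar ⊆ Vbar ×ˢ Vbar) (hnL : nL Vbar Ebar E = 0) {t₀ : α} (ht₀ : t₀ ∈ Vbar)
    (hk : 2 ≤ (classOf Vbar Ebar t₀).card) :
    ∃ (V' : Finset α) (A' E' : Finset (α × α)),
      IsDagCompression Vbar Ebar V' A' E' ∧
      A'.card + E'.card ≤ A.card + E.card ∧
      nL Vbar Ebar E' = 0 ∧
      Unif (classOf Vbar Ebar t₀) A' E' ∧
      (∀ s : α, Unif (classOf Vbar Ebar s) A E → Unif (classOf Vbar Ebar s) A' E') := by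
  classical
  obtain ⟨C, hC⟩ : ∃ C : Finset α, C = classOf Vbar Ebar t₀ := ⟨_, rfl⟩
  have hCsub : C ⊆ Vbar := by rw [hC]; exact fun x hx => classOf_subset_vbar hx
  have hkC : 2 ≤ C.card := by rw [hC]; exact hk
  obtain ⟨r, hr, hbound⟩ := pb_count hD hnL hC hCsub hkC
  obtain ⟨V', A', E', hcomp, hcA, hcE, hAeq, hEeq, hVbV'⟩ :=
    prune Vbar Ebar V (pbA Vbar V A C r) (pbE V E C r) hD.vbar_subset (pbA_subset hD)
      (pbA_acyclic hD) (fun t ht u => pbA_no_out_vbar hD ht u)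
      (Finset.filter_subset _ _) (pb_represents hD hE hC hCsub hr)
  -- membership characterizations
  have memA' : ∀ v t : α, t ∈ Vbar →
      ((v, t) ∈ A' ↔ (v ∈ V' ∧ v ∈ V ∧ (v, rho C r t) ∈ A)) := by
    intro v t ht
    rw [hAeq]
    simp only [Finset.mem_filter]
    constructor
    · rintro ⟨h1, h2, _⟩
      obtain ⟨h4, h5⟩ := (mem_pbA_vbar ht).1 h1
      exact ⟨h2, h4, h5⟩
    · rintro ⟨h1, h2, h3⟩
      exact ⟨(mem_pbA_vbar ht).2 ⟨h2, h3⟩, h1, hVbV' ht⟩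
  have memE'in : ∀ v t : α, t ∈ Vbar →
      ((v, t) ∈ E' ↔ (v ∈ V' ∧ v ∈ V ∧ (rho C r v, rho C r t) ∈ E)) := by
    intro v t ht
    rw [hEeq]
    simp only [Finset.mem_filter]
    constructor
    · rintro ⟨h1, h2, _⟩
      obtain ⟨h4, _, h6⟩ := mem_pbE.1 h1
      exact ⟨h2, h4, h6⟩
    · rintro ⟨h1, h2, h3⟩
      exact ⟨mem_pbE.2 ⟨h2, hD.vbar_subset ht, h3⟩, h1, hVbV' ht⟩
  have memE'out : ∀ t v : α, t ∈ Vbar →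
      ((t, v) ∈ E' ↔ (v ∈ V' ∧ v ∈ V ∧ (rho C r t, rho C r v) ∈ E)) := by
    intro t v ht
    rw [hEeq]
    simp only [Finset.mem_filter]
    constructor
    · rintro ⟨h1, _, h3⟩
      obtain ⟨_, h5, h6⟩ := mem_pbE.1 h1
      exact ⟨h3, h5, h6⟩
    · rintro ⟨h1, h2, h3⟩
      exact ⟨mem_pbE.2 ⟨hD.vbar_subset ht, h2, h3⟩, hVbV' ht, h1⟩
  have hEsub : E' ⊆ pbE V E C r := hEeq ▸ Finset.filter_subset _ _
  -- loops stay absent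
  have hnL' : nL Vbar Ebar E' = 0 := by
    rw [nL, Finset.card_eq_zero]
    by_contra hne
    obtain ⟨e, he⟩ := Finset.nonempty_iff_ne_empty.2 hne
    obtain ⟨heE', h12, hV1, hk1⟩ := Finset.mem_filter.1 he
    have hepb : e ∈ pbE V E C r := hEsub heE'
    have heE : (rho C r e.1, rho C r e.2) ∈ E := (Finset.mem_filter.1 hepb).2
    rw [← h12] at heE
    have hrV : rho C r e.1 ∈ Vbar := rho_mem_vbar hCsub hr hV1
    have hcls : classOf Vbar Ebar (rho C r e.1) = classOf Vbar Ebar e.1 :=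
      (classOf_eq_of_twins (rho_twins hC hr e.1)).symm
    have hmem : ((rho C r e.1, rho C r e.1) : α × α) ∈ loopSet Vbar Ebar E :=
      Finset.mem_filter.2 ⟨heE, rfl, hrV, by rw [hcls]; exact hk1⟩
    have hempty := Finset.card_eq_zero.1 hnL
    rw [hempty] at hmem
    exact Finset.notMem_empty _ hmem
  -- uniformity of the processed class
  have hUC : Unif (classOf Vbar Ebar t₀) A' E' := by
    rw [← hC]
    refine ⟨?_, ?_, ?_⟩
    · intro v t ht t' ht'
      rw [memA' v t (hCsub ht), memA' v t' (hCsub ht'), rho_of_mem ht, rho_of_mem ht']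
    · intro v t ht t' ht'
      rw [memE'in v t (hCsub ht), memE'in v t' (hCsub ht'), rho_of_mem ht, rho_of_mem ht']
    · intro v t ht t' ht'
      rw [memE'out t v (hCsub ht), memE'out t' v (hCsub ht'), rho_of_mem ht, rho_of_mem ht']
  -- preservation of other uniform classes
  have hpres : ∀ s : α, Unif (classOf Vbar Ebar s) A E → Unif (classOf Vbar Ebar s) A' E' := by
    intro s hU
    have hsame : ∀ t ∈ classOf Vbar Ebar s, ∀ t' ∈ classOf Vbar Ebar s, t ∈ C → t' ∈ C := by
      intro t ht t' ht' htC
      have h1 : Twins Ebar t₀ t := (mem_classOf.1 (hC ▸ htC)).2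
      have h2 : Twins Ebar s t := (mem_classOf.1 ht).2
      have h3 : Twins Ebar s t' := (mem_classOf.1 ht').2
      have h4 : Twins Ebar t₀ t' := twins_trans h1 (twins_trans (twins_symm h2) h3)
      rw [hC]
      exact mem_classOf.2 ⟨classOf_subset_vbar ht', h4⟩
    have hrho : ∀ t ∈ classOf Vbar Ebar s, ∀ t' ∈ classOf Vbar Ebar s,
        ∀ P : α → Prop, (∀ u u', u ∈ classOf Vbar Ebar s → u' ∈ classOf Vbar Ebar s →
          (P u ↔ P u')) → (P (rho C r t) ↔ P (rho C r t')) := by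
      intro t ht t' ht' P hP
      by_cases htC : t ∈ C
      · have ht'C : t' ∈ C := hsame t ht t' ht' htC
        rw [rho_of_mem htC, rho_of_mem ht'C]
      · have ht'C : t' ∉ C := fun h => htC (hsame t' ht' t ht h)
        rw [rho_of_not_mem htC, rho_of_not_mem ht'C]
        exact hP t t' ht ht'
    refine ⟨?_, ?_, ?_⟩
    · intro v t ht t' ht'
      rw [memA' v t (classOf_subset_vbar ht), memA' v t' (classOf_subset_vbar ht')]
      have := hrho t ht t' ht' (fun z => (v, z) ∈ A) (fun u u' hu hu' => hU.1 v u hu u' hu')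
      exact and_congr Iff.rfl (and_congr Iff.rfl this)
    · intro v t ht t' ht'
      rw [memE'in v t (classOf_subset_vbar ht), memE'in v t' (classOf_subset_vbar ht')]
      have := hrho t ht t' ht' (fun z => (rho C r v, z) ∈ E)
        (fun u u' hu hu' => hU.2.1 (rho C r v) u hu u' hu')
      exact and_congr Iff.rfl (and_congr Iff.rfl this)
    · intro v t ht t' ht'
      rw [memE'out t v (classOf_subset_vbar ht), memE'out t' v (classOf_subset_vbar ht')]
      have := hrho t ht t' ht' (fun z => (z, rho C r v) ∈ E)
        (fun u u' hu hu' => hU.2.2 (rho C r v) u hu u' hu')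
      exact and_congr Iff.rfl (and_congr Iff.rfl this)
  exact ⟨V', A', E', hcomp, by omega, hnL', hUC, hpres⟩

end Aux10
/-- every directed graph has an optimal DAG compression in which all twins
of the graph are also twins in `(V, A)` and in `(V, E)`. -/
theorem exists_optimal_compression_twins {α : Type*} [DecidableEq α] [Infinite α]
    (Vbar : Finset α) (Ebar : Finset (α × α)) (hE : Ebar ⊆ Vbar ×ˢ Vbar) :
    ∃ (V : Finset α) (A E : Finset (α × α)),
      IsOptimalDagCompression Vbar Ebar V A E ∧
      ∀ t₁ ∈ Vbar, ∀ t₂ ∈ Vbar, Twins Ebar t₁ t₂ → Twins A t₁ t₂ ∧ Twins E t₁ t₂ := by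
  classical
  set S0 : Set ℕ := {n | ∃ (V : Finset α) (A E : Finset (α × α)),
    IsDagCompression Vbar Ebar V A E ∧ A.card + E.card = n} with hS0
  have hS0ne : S0.Nonempty := ⟨_, Vbar, ∅, Ebar, trivial_comp hE, rfl⟩
  set opt := sInf S0 with hopt
  have hoptle : ∀ (V' : Finset α) (A' E' : Finset (α × α)),
      IsDagCompression Vbar Ebar V' A' E' → opt ≤ A'.card + E'.card := by
    intro V' A' E' h
    exact Nat.sInf_le ⟨V', A', E', h, rfl⟩
  -- step 1 : minimize the number of bad loops among optimal compressions
  set S1 : Set ℕ := {n | ∃ (V : Finset α) (A E : Finset (α × α)),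
    IsDagCompression Vbar Ebar V A E ∧ A.card + E.card = opt ∧ nL Vbar Ebar E = n} with hS1
  have hS1ne : S1.Nonempty := by
    obtain ⟨V, A, E, hD, hsize⟩ := Nat.sInf_mem hS0ne
    exact ⟨_, V, A, E, hD, hsize, rfl⟩
  obtain ⟨V1, A1, E1, hD1, hsz1, hn1⟩ := Nat.sInf_mem hS1ne
  have hn1z : nL Vbar Ebar E1 = 0 := by
    by_contra hne
    have hpos : 0 < nL Vbar Ebar E1 := Nat.pos_of_ne_zero hne
    have hmin1 : ∀ (V' : Finset α) (A' E' : Finset (α × α)),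
        IsDagCompression Vbar Ebar V' A' E' → A1.card + E1.card ≤ A'.card + E'.card := by
      intro V' A' E' h
      rw [hsz1]
      exact hoptle V' A' E' h
    obtain ⟨V', A', E', hcomp', hle', hlt'⟩ := phase1 hD1 hmin1 hpos
    have hsz' : A'.card + E'.card = opt :=
      le_antisymm (hsz1 ▸ hle') (hoptle V' A' E' hcomp')
    have hmem : nL Vbar Ebar E' ∈ S1 := ⟨V', A', E', hcomp', hsz', rfl⟩
    have := Nat.sInf_le hmem
    omega
  -- step 2 : minimize the number of non-uniform classes
  set S2 : Set ℕ := {m | ∃ (V : Finset α) (A E : Finset (α × α)),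
    IsDagCompression Vbar Ebar V A E ∧ A.card + E.card = opt ∧ nL Vbar Ebar E = 0 ∧
      mM Vbar Ebar A E = m} with hS2
  have hS2ne : S2.Nonempty := ⟨_, V1, A1, E1, hD1, hsz1, hn1z, rfl⟩
  obtain ⟨V2, A2, E2, hD2, hsz2, hn2, hm2⟩ := Nat.sInf_mem hS2ne
  have hm2z : mM Vbar Ebar A2 E2 = 0 := by
    by_contra hne
    have hpos : 0 < mM Vbar Ebar A2 E2 := Nat.pos_of_ne_zero hne
    obtain ⟨Cl, hCl⟩ := Finset.card_pos.1 hpos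
    obtain ⟨hClim, hClnu⟩ := Finset.mem_filter.1 hCl
    obtain ⟨t₀, ht₀, hCleq⟩ := Finset.mem_image.1 hClim
    have hk : 2 ≤ (classOf Vbar Ebar t₀).card := by
      by_contra hk'
      have h1 : (classOf Vbar Ebar t₀).card = 1 :=
        le_antisymm (by omega) (Finset.card_pos.2 ⟨t₀, mem_classOf_self ht₀⟩)
      obtain ⟨x, hx⟩ := Finset.card_eq_one.1 h1
      have ht₀x : t₀ ∈ ({x} : Finset α) := hx ▸ mem_classOf_self ht₀
      rw [Finset.mem_singleton] at ht₀x
      apply hClnu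
      rw [← hCleq, hx, ← ht₀x]
      exact unif_singleton
    obtain ⟨V', A', E', hcomp', hle', hnL', hUC', hpres'⟩ :=
      pullback_step hD2 hE hn2 ht₀ hk
    have hsz' : A'.card + E'.card = opt :=
      le_antisymm (hsz2 ▸ hle') (hoptle V' A' E' hcomp')
    -- the non-uniform classes strictly decrease
    have hsub : ((Vbar.image (classOf Vbar Ebar)).filter fun C => ¬ Unif C A' E') ⊆
        ((Vbar.image (classOf Vbar Ebar)).filter fun C => ¬ Unif C A2 E2).erase Cl := by
      intro X hX
      obtain ⟨hXim, hXnu⟩ := Finset.mem_filter.1 hX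
      obtain ⟨s, hs, hXeq⟩ := Finset.mem_image.1 hXim
      refine Finset.mem_erase.2 ⟨?_, Finset.mem_filter.2 ⟨hXim, ?_⟩⟩
      · intro hXCl
        apply hXnu
        rw [hXCl, ← hCleq]
        exact hUC'
      · intro hXu
        apply hXnu
        rw [← hXeq]
        exact hpres' s (hXeq ▸ hXu)
    have hlt : mM Vbar Ebar A' E' < mM Vbar Ebar A2 E2 := by
      have h1 := Finset.card_le_card hsub
      rw [Finset.card_erase_of_mem hCl] at h1
      unfold mM
      unfold mM at hpos
      omega
    have hmem : mM Vbar Ebar A' E' ∈ S2 := ⟨V', A', E', hcomp', hsz', hnL', rfl⟩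
    have := Nat.sInf_le hmem
    omega
  -- final witness
  refine ⟨V2, A2, E2, ⟨hD2, ?_⟩, ?_⟩
  · intro V' A' E' h
    rw [hsz2]
    exact hoptle V' A' E' h
  · intro t₁ ht₁ t₂ ht₂ htw
    have hUnif : Unif (classOf Vbar Ebar t₁) A2 E2 := by
      by_contra hnu
      have hmem : classOf Vbar Ebar t₁ ∈
          ((Vbar.image (classOf Vbar Ebar)).filter fun C => ¬ Unif C A2 E2) :=
        Finset.mem_filter.2 ⟨Finset.mem_image.2 ⟨t₁, ht₁, rfl⟩, hnu⟩
      have : 0 < mM Vbar Ebar A2 E2 := Finset.card_pos.2 ⟨_, hmem⟩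
      omega
    have hm1 : t₁ ∈ classOf Vbar Ebar t₁ := mem_classOf_self ht₁
    have hm2' : t₂ ∈ classOf Vbar Ebar t₁ := mem_classOf.2 ⟨ht₂, htw⟩
    constructor
    · constructor
      · intro v
        exact hUnif.1 v t₁ hm1 t₂ hm2'
      · intro v
        exact iff_of_false (sink_no_out hD2 ht₁ v) (sink_no_out hD2 ht₂ v)
    · constructor
      · intro v
        exact hUnif.2.1 v t₁ hm1 t₂ hm2'
      · intro v
        exact hUnif.2.2 v t₁ hm1 t₂ hm2'
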